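/- arXiv:2602.21274 — 3 statements merged into one kernel-verified Lean document; each statement's English description precedes it below -/
import Mathlib

section
/- At every (x,y) ∈ ℝ × (0,∞), the partial derivatives ∂v/∂x(x,y) and ∂v/∂y(x,y) exist and satisfy α·∂v/∂x(x,y) + ∂v/∂y(x,y) = u(x), where u(x) := ∑_{j=1}^{m_p+1} K_{j−1} e^{r_{j−1}(x−b*)} if x < b* and u(x) := x − c if x ≥ b*. In particular the directional derivative α·∂v/∂x + ∂v/∂y depends only on x. -/
open Finset Matrix MeasureTheory

/-- The (i,j) cofactor of a square matrix: (−1)^(i+j) times the determinant of the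
submatrix obtained by deleting row `i` and column `j`. -/
noncomputable def cof {n : ℕ} (M : Matrix (Fin (n + 1)) (Fin (n + 1)) ℝ)
    (i j : Fin (n + 1)) : ℝ :=
  (-1 : ℝ) ^ ((i : ℕ) + (j : ℕ)) * (M.submatrix i.succAbove j.succAbove).det

open Polynomial in
lemma coeff_lagrange_basis {ι : Type*} [DecidableEq ι] (s : Finset ι) (v : ι → ℝ)
    (hvs : Set.InjOn v s) {i : ι} (hi : i ∈ s) :
    (Lagrange.basis s v i).coeff (s.card - 1) = (∏ j ∈ s.erase i, (v i - v j))⁻¹ := by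
  have hd : (Lagrange.basis s v i).natDegree = s.card - 1 := Lagrange.natDegree_basis hvs hi
  rw [← hd, coeff_natDegree, Lagrange.basis, leadingCoeff_prod, ← Finset.prod_inv_distrib]
  refine Finset.prod_congr rfl fun j hj => ?_
  rw [Lagrange.basisDivisor, leadingCoeff_mul, leadingCoeff_C, leadingCoeff_X_sub_C, mul_one]

open Polynomial in
lemma dd_top {ι : Type*} [DecidableEq ι] (s : Finset ι) (v : ι → ℝ)
    (hvs : Set.InjOn v s) (f : ℝ[X]) (hf : f.degree < s.card) :
    ∑ i ∈ s, f.eval (v i) * (∏ j ∈ s.erase i, (v i - v j))⁻¹ = f.coeff (s.card - 1) := by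
  conv_rhs => rw [Lagrange.eq_interpolate hvs hf]
  rw [Lagrange.interpolate_apply, Polynomial.finset_sum_coeff]
  refine Finset.sum_congr rfl fun i hi => ?_
  rw [Polynomial.coeff_C_mul, coeff_lagrange_basis s v hvs hi]

open Polynomial in
lemma prod_XsubC_coeff0 {ι : Type*} (s : Finset ι) (a : ι → ℝ) :
    (∏ i ∈ s, (X - C (a i))).coeff 0 = ∏ i ∈ s, (-a i) := by
  rw [Polynomial.coeff_zero_eq_eval_zero, Polynomial.eval_prod]
  exact Finset.prod_congr rfl fun i _ => by simp

open Polynomial in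
lemma prod_XsubC_coeff1 {ι : Type*} [DecidableEq ι] (s : Finset ι) (a : ι → ℝ) :
    (∏ i ∈ s, (X - C (a i))).coeff 1 = ∑ i ∈ s, ∏ j ∈ s.erase i, (-a j) := by
  induction s using Finset.induction with
  | empty => simp [Polynomial.coeff_one]
  | @insert x t hx ih =>
    rw [Finset.prod_insert hx, sub_mul, Polynomial.coeff_sub]
    have h1 : (X * ∏ i ∈ t, (X - C (a i))).coeff 1 = (∏ i ∈ t, (X - C (a i))).coeff 0 :=
      Polynomial.coeff_X_mul _ 0
    rw [h1, Polynomial.coeff_C_mul, ih, prod_XsubC_coeff0]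
    rw [Finset.sum_insert hx, Finset.erase_insert hx]
    have h2 : ∑ i ∈ t, ∏ j ∈ (insert x t).erase i, (-a j)
        = ∑ i ∈ t, (-a x) * ∏ j ∈ t.erase i, (-a j) := by
      refine Finset.sum_congr rfl fun i hi => ?_
      rw [Finset.erase_insert_of_ne (ne_of_mem_of_not_mem hi hx).symm,
        Finset.prod_insert (fun h => hx (Finset.mem_of_mem_erase h))]
    rw [h2, ← Finset.mul_sum]
    ring

lemma cramer_single_eq_cof {n : ℕ} (A : Matrix (Fin (n+1)) (Fin (n+1)) ℝ) (j : Fin (n+1)) :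
    cramer A (Pi.single 0 1) j = cof A 0 j := by
  rw [Matrix.cramer_apply, Matrix.det_succ_column _ j]
  rw [Finset.sum_eq_single (0 : Fin (n+1))]
  · rw [Matrix.updateCol_self, Matrix.submatrix_updateCol_succAbove]
    simp [cof]
  · intro i _ hi
    rw [Matrix.updateCol_self]
    simp [Pi.single_eq_of_ne hi]
  · simp

open Polynomial in
lemma key_sum (mp : ℕ) (hmp : 1 ≤ mp) (βp r : ℕ → ℝ) (hr0 : 0 < r 0)
    (hinter : ∀ k, 1 ≤ k → k ≤ mp → r (k - 1) < βp k ∧ βp k < r k)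
    (A : Matrix (Fin (mp + 1)) (Fin (mp + 1)) ℝ)
    (hA : ∀ i j : Fin (mp + 1), A i j = if (i : ℕ) = 0 then 1 else βp i / (βp i - r j))
    (hdet : A.det ≠ 0)
    (R : ℝ)
    (hR : R = (∏ k ∈ Finset.range (mp + 1), r k) / ∏ k ∈ Finset.Icc 1 mp, βp k)
    (K : ℕ → ℝ)
    (hK : ∀ j : Fin (mp + 1), K j = R * cof A 0 j / ((r j) ^ 2 * A.det))
    (b c : ℝ)
    (hb : b = c + (∑ i ∈ Finset.range (mp + 1), 1 / r i) - ∑ i ∈ Finset.Icc 1 mp, 1 / βp i) :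
    ∑ j ∈ Finset.range (mp + 1), K j = b - c := by
  -- ordering facts
  have hrsucc : ∀ j, j < mp → r j < r (j + 1) := by
    intro j hj
    have h := hinter (j + 1) (by omega) (by omega)
    simp only [Nat.add_sub_cancel] at h
    exact h.1.trans h.2
  have hrmono : ∀ k, k ≤ mp → ∀ j, j < k → r j < r k := by
    intro k
    induction k with
    | zero => omega
    | succ n ihn =>
      intro hk j hj
      have hn : r n < r (n + 1) := hrsucc n (by omega)
      rcases Nat.lt_or_ge j n with h | h
      · exact (ihn (by omega) j h).trans hn
      · have : j = n := by omega
        rw [this]; exact hn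
  have hrpos : ∀ j, j ≤ mp → 0 < r j := by
    intro j hj
    rcases Nat.eq_zero_or_pos j with h | h
    · rw [h]; exact hr0
    · exact hr0.trans (hrmono j hj 0 h)
  have hrne : ∀ j, j ≤ mp → r j ≠ 0 := fun j hj => ne_of_gt (hrpos j hj)
  have hβpos : ∀ i, 1 ≤ i → i ≤ mp → 0 < βp i := by
    intro i h1 h2
    exact (hrpos (i - 1) (by omega)).trans (hinter i h1 h2).1
  have hβne : ∀ i, 1 ≤ i → i ≤ mp → βp i ≠ 0 := fun i h1 h2 => ne_of_gt (hβpos i h1 h2)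
  have hrβ : ∀ i j, 1 ≤ i → i ≤ mp → j ≤ mp → βp i - r j ≠ 0 := by
    intro i j h1 h2 hj
    rcases Nat.lt_or_ge j i with h | h
    · have hrj : r j ≤ r (i - 1) := by
        rcases Nat.lt_or_ge j (i - 1) with hh | hh
        · exact le_of_lt (hrmono (i - 1) (by omega) j hh)
        · have : j = i - 1 := by omega
          rw [this]
      have := lt_of_le_of_lt hrj (hinter i h1 h2).1
      exact ne_of_gt (sub_pos.mpr this)
    · have hri : r i ≤ r j := by
        rcases Nat.lt_or_ge i j with hh | hh
        · exact le_of_lt (hrmono j hj i hh)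
        · have : i = j := by omega
          rw [this]
      have := lt_of_lt_of_le (hinter i h1 h2).2 hri
      exact ne_of_lt (sub_neg.mpr this)
  have hinjr : Set.InjOn r (Finset.range (mp + 1)) := by
    intro a ha b hb heq
    simp only [Finset.coe_range, Set.mem_Iio] at ha hb
    by_contra hne
    rcases lt_or_gt_of_ne hne with h | h
    · exact absurd heq (ne_of_lt (hrmono b (by omega) a h))
    · exact absurd heq.symm (ne_of_lt (hrmono a (by omega) b h))
  -- weights and divided differences
  set w : ℕ → ℝ := fun j => (∏ k ∈ (Finset.range (mp + 1)).erase j, (r j - r k))⁻¹ with hw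
  have ddR : ∀ f : ℝ[X], f.degree < ((mp + 1 : ℕ) : WithBot ℕ) →
      ∑ j ∈ Finset.range (mp + 1), f.eval (r j) * w j = f.coeff mp := by
    intro f hf
    have h := dd_top (Finset.range (mp + 1)) r hinjr f (by rwa [Finset.card_range])
    rw [Finset.card_range] at h
    simpa using h
  -- polynomials
  set Np : ℝ[X] := ∏ i ∈ Finset.Icc 1 mp, (X - C (βp i)) with hNp
  set Dp : ℝ[X] := ∏ j ∈ Finset.range (mp + 1), (X - C (r j)) with hDp
  have hNpmonic : Np.Monic := monic_prod_of_monic _ _ fun i _ => monic_X_sub_C _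
  have hDpmonic : Dp.Monic := monic_prod_of_monic _ _ fun i _ => monic_X_sub_C _
  have hcardIcc : (Finset.Icc 1 mp).card = mp := by
    rw [Nat.card_Icc]; omega
  have hNpdeg : Np.natDegree = mp := by
    rw [hNp, natDegree_prod_of_monic _ _ fun i _ => monic_X_sub_C _]
    simp [hcardIcc]
  have hDpdeg : Dp.natDegree = mp + 1 := by
    rw [hDp, natDegree_prod_of_monic _ _ fun i _ => monic_X_sub_C _]
    simp
  set N0 : ℝ := Np.coeff 0 with hN0
  set N1 : ℝ := Np.coeff 1 with hN1
  set D0 : ℝ := Dp.coeff 0 with hD0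
  set D1 : ℝ := Dp.coeff 1 with hD1
  have hN0eq : N0 = ∏ i ∈ Finset.Icc 1 mp, (-βp i) := prod_XsubC_coeff0 _ _
  have hD0eq : D0 = ∏ k ∈ Finset.range (mp + 1), (-r k) := prod_XsubC_coeff0 _ _
  have hN0ne : N0 ≠ 0 := by
    rw [hN0eq]
    exact Finset.prod_ne_zero_iff.mpr fun i hi => by
      simp only [Finset.mem_Icc] at hi
      exact neg_ne_zero.mpr (hβne i hi.1 hi.2)
  have hD0ne : D0 ≠ 0 := by
    rw [hD0eq]
    exact Finset.prod_ne_zero_iff.mpr fun j hj => by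
      simp only [Finset.mem_range] at hj
      exact neg_ne_zero.mpr (hrne j (by omega))

  -- coeff-1 identities
  have hD1eq : D1 = -D0 * ∑ i ∈ Finset.range (mp + 1), 1 / r i := by
    have h := prod_XsubC_coeff1 (Finset.range (mp + 1)) r
    rw [← hDp] at h
    rw [hD1, h, Finset.mul_sum]
    refine Finset.sum_congr rfl fun j hj => ?_
    simp only [Finset.mem_range] at hj
    have hprod : ∏ k ∈ Finset.range (mp + 1), (-r k)
        = (-r j) * ∏ k ∈ (Finset.range (mp + 1)).erase j, (-r k) :=
      (Finset.mul_prod_erase _ _ (Finset.mem_range.mpr hj)).symm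
    rw [hD0eq, hprod]
    have := hrne j (by omega)
    field_simp
  have hN1eq : N1 = -N0 * ∑ i ∈ Finset.Icc 1 mp, 1 / βp i := by
    have h := prod_XsubC_coeff1 (Finset.Icc 1 mp) βp
    rw [← hNp] at h
    rw [hN1, h, Finset.mul_sum]
    refine Finset.sum_congr rfl fun j hj => ?_
    simp only [Finset.mem_Icc] at hj
    have hprod : ∏ k ∈ Finset.Icc 1 mp, (-βp k)
        = (-βp j) * ∏ k ∈ (Finset.Icc 1 mp).erase j, (-βp k) :=
      (Finset.mul_prod_erase _ _ (Finset.mem_Icc.mpr hj)).symm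
    rw [hN0eq, hprod]
    have := hβne j hj.1 hj.2
    field_simp
  -- T1 and T2
  set T1 : ℝ := ∑ j ∈ Finset.range (mp + 1), w j / r j with hT1
  set T2 : ℝ := ∑ j ∈ Finset.range (mp + 1), w j / (r j) ^ 2 with hT2
  have hDpeval : ∀ j, j ≤ mp → Dp.eval (r j) = 0 := by
    intro j hj
    rw [hDp, eval_prod]
    exact Finset.prod_eq_zero (i := j) (Finset.mem_range.mpr (by omega)) (by simp)
  -- P : (Dp - C D0) = X * P
  obtain ⟨P, hP⟩ : (X : ℝ[X]) ∣ Dp - C D0 := by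
    rw [X_dvd_iff]
    simp [hD0]
  have hsubdeg : (Dp - C D0).natDegree ≤ mp + 1 :=
    le_trans (natDegree_sub_le _ _) (by simp [hDpdeg])
  have hPdeg : P.degree < ((mp + 1 : ℕ) : WithBot ℕ) := by
    by_cases hP0 : P = 0
    · rw [hP0, degree_zero]; exact WithBot.bot_lt_coe _
    · rw [← natDegree_lt_iff_degree_lt hP0]
      have : (X * P).natDegree ≤ mp + 1 := by rw [← hP]; exact hsubdeg
      rw [natDegree_mul X_ne_zero hP0, natDegree_X] at this
      omega
  have hPtop : P.coeff mp = 1 := by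
    have h := congrArg (fun f : ℝ[X] => f.coeff (mp + 1)) hP
    simp only [coeff_sub, coeff_C, Nat.succ_ne_zero, if_neg (Nat.succ_ne_zero mp)] at h
    rw [coeff_X_mul] at h
    rw [← h]
    have : Dp.coeff (mp + 1) = 1 := by
      have := hDpmonic.coeff_natDegree
      rwa [hDpdeg] at this
    simp [this]
  have hPeval : ∀ j, j ≤ mp → P.eval (r j) = -D0 / r j := by
    intro j hj
    have h := congrArg (fun f : ℝ[X] => f.eval (r j)) hP
    simp only [eval_sub, eval_C, eval_mul, eval_X, hDpeval j hj] at h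
    rw [eq_div_iff (hrne j hj)]
    linarith [h]
  have hT1D : -D0 * T1 = 1 := by
    have h := ddR P hPdeg
    rw [hPtop] at h
    rw [hT1, Finset.mul_sum, ← h]
    refine Finset.sum_congr rfl fun j hj => ?_
    simp only [Finset.mem_range] at hj
    rw [hPeval j (by omega)]
    ring
  -- Q : Dp - C D0 - C D1 * X = X^2 * Q
  obtain ⟨Q, hQ⟩ : (X : ℝ[X]) ^ 2 ∣ Dp - C D0 - C D1 * X := by
    rw [X_pow_dvd_iff]
    intro d hd
    interval_cases d
    · simp [hD0]
    · simp [hD1]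
  have hQtop : Q.coeff mp = 0 := by
    have h := congrArg (fun f : ℝ[X] => f.coeff (mp + 2)) hQ
    rw [coeff_X_pow_mul] at h
    rw [← h]
    refine coeff_eq_zero_of_natDegree_lt ?_
    refine lt_of_le_of_lt (natDegree_sub_le _ _) ?_
    have h1 : (Dp - C D0).natDegree ≤ mp + 1 := hsubdeg
    have h2 : (C D1 * X).natDegree ≤ mp + 1 := by
      refine le_trans (natDegree_mul_le) ?_
      simp
    omega
  have hQdeg : Q.degree < ((mp + 1 : ℕ) : WithBot ℕ) := by
    by_cases hQ0 : Q = 0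
    · rw [hQ0, degree_zero]; exact WithBot.bot_lt_coe _
    · rw [← natDegree_lt_iff_degree_lt hQ0]
      have hbound : (X ^ 2 * Q : ℝ[X]).natDegree ≤ mp + 1 := by
        rw [← hQ]
        refine le_trans (natDegree_sub_le _ _) ?_
        have h2 : (C D1 * X : ℝ[X]).natDegree ≤ mp + 1 := by
          refine le_trans (natDegree_mul_le) ?_
          simp
        omega
      rw [natDegree_mul (pow_ne_zero 2 X_ne_zero) hQ0, natDegree_X_pow] at hbound
      omega
  have hQeval : ∀ j, j ≤ mp → Q.eval (r j) = (-D0 - D1 * r j) / (r j) ^ 2 := by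
    intro j hj
    have h := congrArg (fun f : ℝ[X] => f.eval (r j)) hQ
    simp only [eval_sub, eval_C, eval_mul, eval_X, eval_pow, hDpeval j hj] at h
    rw [eq_div_iff (pow_ne_zero 2 (hrne j hj))]
    linarith [h]
  have hQsum : -D0 * T2 - D1 * T1 = 0 := by
    have h := ddR Q hQdeg
    rw [hQtop] at h
    rw [hT1, hT2, Finset.mul_sum, Finset.mul_sum, ← h, ← Finset.sum_sub_distrib]
    refine Finset.sum_congr rfl fun j hj => ?_
    simp only [Finset.mem_range] at hj
    rw [hQeval j (by omega)]
    have := hrne j (by omega)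
    field_simp
  -- E : Np - C N0 - C N1 * X = X^2 * E
  obtain ⟨E, hE⟩ : (X : ℝ[X]) ^ 2 ∣ Np - C N0 - C N1 * X := by
    rw [X_pow_dvd_iff]
    intro d hd
    interval_cases d
    · simp [hN0]
    · simp [hN1]
  have hEtop : E.coeff mp = 0 := by
    have h := congrArg (fun f : ℝ[X] => f.coeff (mp + 2)) hE
    rw [coeff_X_pow_mul] at h
    rw [← h]
    refine coeff_eq_zero_of_natDegree_lt ?_
    have h1 : (Np - C N0).natDegree ≤ mp :=
      le_trans (natDegree_sub_le _ _) (by simp [hNpdeg])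
    have h2 : (C N1 * X : ℝ[X]).natDegree ≤ mp + 1 := by
      refine le_trans (natDegree_mul_le) ?_
      simp
    refine lt_of_le_of_lt (natDegree_sub_le _ _) ?_
    omega
  have hEdeg : E.degree < ((mp + 1 : ℕ) : WithBot ℕ) := by
    by_cases hE0 : E = 0
    · rw [hE0, degree_zero]; exact WithBot.bot_lt_coe _
    · rw [← natDegree_lt_iff_degree_lt hE0]
      have hbound : (X ^ 2 * E : ℝ[X]).natDegree ≤ mp + 1 := by
        rw [← hE]
        have h1 : (Np - C N0).natDegree ≤ mp :=
          le_trans (natDegree_sub_le _ _) (by simp [hNpdeg])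
        have h2 : (C N1 * X : ℝ[X]).natDegree ≤ mp + 1 := by
          refine le_trans (natDegree_mul_le) ?_
          simp
        refine le_trans (natDegree_sub_le _ _) ?_
        omega
      rw [natDegree_mul (pow_ne_zero 2 X_ne_zero) hE0, natDegree_X_pow] at hbound
      omega
  have hEsum : ∑ j ∈ Finset.range (mp + 1), E.eval (r j) * w j = 0 := by
    rw [ddR E hEdeg, hEtop]
  have hNeval : ∀ j, j ≤ mp →
      Np.eval (r j) = N0 + N1 * r j + (r j) ^ 2 * E.eval (r j) := by
    intro j hj
    have h := congrArg (fun f : ℝ[X] => f.eval (r j)) hE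
    simp only [eval_sub, eval_C, eval_mul, eval_X, eval_pow] at h
    linarith [h]
  have hMain : ∑ j ∈ Finset.range (mp + 1), Np.eval (r j) * w j / (r j) ^ 2
      = N0 * T2 + N1 * T1 := by
    have hsplit : ∀ j ∈ Finset.range (mp + 1),
        Np.eval (r j) * w j / (r j) ^ 2
          = N0 * (w j / (r j) ^ 2) + N1 * (w j / r j) + E.eval (r j) * w j := by
      intro j hj
      simp only [Finset.mem_range] at hj
      rw [hNeval j (by omega)]
      have := hrne j (by omega)
      field_simp
    rw [Finset.sum_congr rfl hsplit, Finset.sum_add_distrib, Finset.sum_add_distrib,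
      hEsum, add_zero, ← Finset.mul_sum, ← Finset.mul_sum]

  -- the solution vector z and the linear system
  set z : Fin (mp + 1) → ℝ := fun j => Np.eval (r j) * w j with hz
  have hsum0 : ∑ j ∈ Finset.range (mp + 1), Np.eval (r j) * w j = 1 := by
    have hdeg : Np.degree < ((mp + 1 : ℕ) : WithBot ℕ) := by
      refine lt_of_le_of_lt degree_le_natDegree ?_
      rw [hNpdeg]
      exact_mod_cast Nat.lt_succ_self mp
    rw [ddR Np hdeg]
    have := hNpmonic.coeff_natDegree
    rwa [hNpdeg] at this
  have hrow : ∀ i : ℕ, 1 ≤ i → i ≤ mp →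
      ∑ j ∈ Finset.range (mp + 1), βp i / (βp i - r j) * (Np.eval (r j) * w j) = 0 := by
    intro i h1 h2
    have hmem : i ∈ Finset.Icc 1 mp := Finset.mem_Icc.mpr ⟨h1, h2⟩
    set Mi : ℝ[X] := ∏ k ∈ (Finset.Icc 1 mp).erase i, (X - C (βp k)) with hMi
    have hfac : Np = (X - C (βp i)) * Mi :=
      (Finset.mul_prod_erase _ (fun k => (X : ℝ[X]) - C (βp k)) hmem).symm
    have hMideg : Mi.natDegree = mp - 1 := by
      rw [hMi, natDegree_prod_of_monic _ _ fun k _ => monic_X_sub_C _]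
      simp [Finset.card_erase_of_mem hmem, hcardIcc]
    have hMidegree : Mi.degree < ((mp + 1 : ℕ) : WithBot ℕ) := by
      refine lt_of_le_of_lt degree_le_natDegree ?_
      rw [hMideg]
      exact_mod_cast (by omega : mp - 1 < mp + 1)
    have hMisum : ∑ j ∈ Finset.range (mp + 1), Mi.eval (r j) * w j = 0 := by
      rw [ddR Mi hMidegree]
      exact coeff_eq_zero_of_natDegree_lt (by omega)
    have hterm : ∀ j ∈ Finset.range (mp + 1),
        βp i / (βp i - r j) * (Np.eval (r j) * w j)
          = -βp i * (Mi.eval (r j) * w j) := by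
      intro j hj
      simp only [Finset.mem_range] at hj
      have hne := hrβ i j h1 h2 (by omega)
      rw [hfac]
      simp only [eval_mul, eval_sub, eval_X, eval_C]
      field_simp
      ring
    rw [Finset.sum_congr rfl hterm, ← Finset.mul_sum, hMisum, mul_zero]
  have hAz : A.mulVec z = Pi.single 0 1 := by
    funext i
    have hmv : A.mulVec z i = ∑ j : Fin (mp + 1), A i j * z j := by
      simp [Matrix.mulVec, dotProduct]
    by_cases hi : (i : ℕ) = 0
    · have hieq : i = 0 := Fin.ext hi
      rw [hmv]
      have : ∀ j : Fin (mp + 1), A i j * z j = Np.eval (r j) * w j := by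
        intro j
        rw [hA i j, if_pos hi, one_mul]
      rw [Finset.sum_congr rfl fun j _ => this j]
      rw [Fin.sum_univ_eq_sum_range (fun j => Np.eval (r j) * w j) (mp + 1)]
      rw [hsum0, hieq]
      simp
    · have hieq : i ≠ 0 := fun h => hi (by rw [h]; rfl)
      rw [hmv]
      have h1i : 1 ≤ (i : ℕ) := by omega
      have h2i : (i : ℕ) ≤ mp := by omega
      have : ∀ j : Fin (mp + 1), A i j * z j
          = βp i / (βp i - r j) * (Np.eval (r j) * w j) := by
        intro j
        rw [hA i j, if_neg hi]
      rw [Finset.sum_congr rfl fun j _ => this j]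
      rw [Fin.sum_univ_eq_sum_range
        (fun j => βp i / (βp i - r j) * (Np.eval (r j) * w j)) (mp + 1)]
      rw [hrow (i : ℕ) h1i h2i]
      simp [Pi.single_eq_of_ne hieq]
  have hiu : IsUnit A.det := isUnit_iff_ne_zero.mpr hdet
  have hcz : ∀ j : Fin (mp + 1), cof A 0 j = A.det * z j := by
    have h1 : A.mulVec (cramer A (Pi.single 0 1)) = A.mulVec (A.det • z) := by
      rw [Matrix.mulVec_cramer, Matrix.mulVec_smul, hAz]
    have h2 : cramer A (Pi.single 0 1) = A.det • z :=
      (Matrix.mulVec_injective_iff_isUnit.mpr (isUnit_iff_isUnit_det A |>.mpr hiu)) h1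
    intro j
    rw [← cramer_single_eq_cof A j, h2]
    simp [mul_comm]
  have hKj : ∀ j ∈ Finset.range (mp + 1),
      K j = R * (Np.eval (r j) * w j) / (r j) ^ 2 := by
    intro j hj
    simp only [Finset.mem_range] at hj
    have h := hK ⟨j, hj⟩
    have h2 := hcz ⟨j, hj⟩
    simp only [hz, Fin.val_mk] at h h2
    rw [h, h2]
    have hrj := hrne j (by omega)
    field_simp
  -- final assembly
  have hT1eq : T1 = -(1 / D0) := by
    field_simp
    field_simp at hT1D
    linarith
  have hT2eq : T2 = D1 / D0 ^ 2 := by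
    rw [eq_div_iff (pow_ne_zero 2 hD0ne)]
    have : D1 * T1 = -D0 * T2 := by linarith
    rw [hT1eq] at this
    field_simp at this
    linarith
  have hReq : R = -D0 / N0 := by
    have hβprodne : (∏ k ∈ Finset.Icc 1 mp, βp k) ≠ 0 :=
      Finset.prod_ne_zero_iff.mpr fun i hi => by
        simp only [Finset.mem_Icc] at hi
        exact hβne i hi.1 hi.2
    have hneg1 : ∀ (g : ℕ → ℝ) (t : Finset ℕ), ∀ k ∈ t, -g k = (-1) * g k :=
      fun g t k _ => by ring
    have hnegr : ∏ k ∈ Finset.range (mp + 1), (-r k)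
        = (-1 : ℝ) ^ (mp + 1) * ∏ k ∈ Finset.range (mp + 1), r k := by
      rw [Finset.prod_congr rfl (hneg1 r (Finset.range (mp + 1))),
        Finset.prod_mul_distrib, Finset.prod_const, Finset.card_range]
    have hnegβ : ∏ k ∈ Finset.Icc 1 mp, (-βp k)
        = (-1 : ℝ) ^ mp * ∏ k ∈ Finset.Icc 1 mp, βp k := by
      rw [Finset.prod_congr rfl (hneg1 βp (Finset.Icc 1 mp)),
        Finset.prod_mul_distrib, Finset.prod_const, hcardIcc]
    rw [hR, hD0eq, hN0eq, hnegr, hnegβ, pow_succ]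
    have hm1 : ((-1 : ℝ) ^ mp) ≠ 0 := pow_ne_zero _ (by norm_num)
    field_simp
  rw [Finset.sum_congr rfl hKj]
  have hsum2 : ∑ j ∈ Finset.range (mp + 1), R * (Np.eval (r j) * w j) / (r j) ^ 2
      = R * ∑ j ∈ Finset.range (mp + 1), Np.eval (r j) * w j / (r j) ^ 2 := by
    rw [Finset.mul_sum]
    exact Finset.sum_congr rfl fun j hj => by ring
  rw [hsum2, hMain, hReq, hT1eq, hT2eq, hN1eq, hD1eq, hb]
  field_simp
  ring

set_option maxHeartbeats 1000000 in
theorem stmt11 (σ μ ρ lamn lamp c : ℝ)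
    (hσ : 0 < σ) (hρ : 0 < ρ) (hlamn : 0 < lamn) (hlamp : 0 < lamp) (hc : 0 < c)
    (mp mn : ℕ) (hmp : 1 ≤ mp) (hmn : 1 ≤ mn)
    (ωp βp ωn βn : ℕ → ℝ)
    (hωp : ∀ k, 1 ≤ k → k ≤ mp → 0 < ωp k)
    (hωpsum : ∑ k ∈ Finset.Icc 1 mp, ωp k = 1)
    (hβp1 : 0 < βp 1)
    (hβpmono : ∀ k, 1 ≤ k → k < mp → βp k < βp (k + 1))
    (hωn : ∀ k, 1 ≤ k → k ≤ mn → 0 < ωn k)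
    (hωnsum : ∑ k ∈ Finset.Icc 1 mn, ωn k = 1)
    (hβn1 : 0 < βn 1)
    (hβnmono : ∀ k, 1 ≤ k → k < mn → βn k < βn (k + 1))
    (r : ℕ → ℝ)
    (hroot : ∀ j, j ≤ mp →
      σ ^ 2 * (r j) ^ 2 / 2 + μ * r j - (ρ + lamn + lamp)
        + lamp * ∑ i ∈ Finset.Icc 1 mp, ωp i * βp i / (βp i - r j)
        + lamn * ∑ i ∈ Finset.Icc 1 mn, ωn i * βn i / (r j + βn i) = 0)
    (hr0 : 0 < r 0)
    (hinter : ∀ k, 1 ≤ k → k ≤ mp → r (k - 1) < βp k ∧ βp k < r k)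
    (A : Matrix (Fin (mp + 1)) (Fin (mp + 1)) ℝ)
    (hA : ∀ i j : Fin (mp + 1), A i j = if (i : ℕ) = 0 then 1 else βp i / (βp i - r j))
    (hdet : A.det ≠ 0)
    (R : ℝ)
    (hR : R = (∏ k ∈ Finset.range (mp + 1), r k) / ∏ k ∈ Finset.Icc 1 mp, βp k)
    (K : ℕ → ℝ)
    (hK : ∀ j : Fin (mp + 1), K j = R * cof A 0 j / ((r j) ^ 2 * A.det))
    (b : ℝ)
    (hb : b = c + (∑ i ∈ Finset.range (mp + 1), 1 / r i) - ∑ i ∈ Finset.Icc 1 mp, 1 / βp i)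
    (α : ℝ) (hα : 0 < α)
    (v : ℝ → ℝ → ℝ)
    (hv : ∀ x y : ℝ,
      v x y =
        if x < b then
          ∑ j ∈ Finset.range (mp + 1),
            K j / (α * r j) * (1 - Real.exp (-(α * r j * y))) * Real.exp (r j * (x - b))
        else if x < α * y + b then
          (∑ j ∈ Finset.range (mp + 1),
            K j / (α * r j) * (1 - Real.exp (-(α * r j * (y - (x - b) / α)))))
            + ((x - c) ^ 2 - (b - c) ^ 2) / (2 * α)
        else (x - c) * y - α * y ^ 2 / 2)
    :
    ∀ x y : ℝ, 0 < y →
      ∃ vx vy : ℝ,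
        HasDerivAt (fun t => v t y) vx x ∧
        HasDerivAt (fun t => v x t) vy y ∧
        α * vx + vy =
          (if x < b then ∑ j ∈ Finset.range (mp + 1), K j * Real.exp (r j * (x - b))
           else x - c) := by
  have hKsum : ∑ j ∈ Finset.range (mp + 1), K j = b - c :=
    key_sum mp hmp βp r hr0 hinter A hA hdet R hR K hK b c hb
  have hαne : α ≠ 0 := ne_of_gt hα
  -- r is positive on range
  have hrsucc : ∀ j, j < mp → r j < r (j + 1) := by
    intro j hj
    have h := hinter (j + 1) (by omega) (by omega)
    simp only [Nat.add_sub_cancel] at h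
    exact h.1.trans h.2
  have hrmono : ∀ k, k ≤ mp → ∀ j, j < k → r j < r k := by
    intro k
    induction k with
    | zero => omega
    | succ n ihn =>
      intro hk j hj
      have hn : r n < r (n + 1) := hrsucc n (by omega)
      rcases Nat.lt_or_ge j n with h | h
      · exact (ihn (by omega) j h).trans hn
      · have : j = n := by omega
        rw [this]; exact hn
  have hrpos : ∀ j, j ≤ mp → 0 < r j := by
    intro j hj
    rcases Nat.eq_zero_or_pos j with h | h
    · rw [h]; exact hr0
    · exact hr0.trans (hrmono j hj 0 h)
  have hrne : ∀ j, j ∈ Finset.range (mp + 1) → r j ≠ 0 := fun j hj =>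
    ne_of_gt (hrpos j (by simpa using Nat.lt_succ_iff.mp (Finset.mem_range.mp hj)))
  intro x y hy
  have hyb : b < α * y + b := by nlinarith
  -- basic HasDerivAt constructions
  have hF1d : ∀ t : ℝ, HasDerivAt
      (fun u => ∑ j ∈ Finset.range (mp + 1),
        K j / (α * r j) * (1 - Real.exp (-(α * r j * y))) * Real.exp (r j * (u - b)))
      (∑ j ∈ Finset.range (mp + 1),
        K j / α * (1 - Real.exp (-(α * r j * y))) * Real.exp (r j * (t - b))) t := by
    intro t
    refine HasDerivAt.fun_sum fun j hj => ?_
    have h1 : HasDerivAt (fun u : ℝ => r j * (u - b)) (r j) t := by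
      simpa using ((hasDerivAt_id t).sub_const b).const_mul (r j)
    have h3 := (h1.exp).const_mul (K j / (α * r j) * (1 - Real.exp (-(α * r j * y))))
    refine h3.congr_deriv ?_
    have hrj := hrne j hj
    field_simp
  have hF2d : ∀ t : ℝ, HasDerivAt
      (fun u => (∑ j ∈ Finset.range (mp + 1),
        K j / (α * r j) * (1 - Real.exp (-(α * r j * (y - (u - b) / α)))))
        + ((u - c) ^ 2 - (b - c) ^ 2) / (2 * α))
      ((∑ j ∈ Finset.range (mp + 1),
        -(K j / α * Real.exp (-(α * r j * (y - (t - b) / α))))) + (t - c) / α) t := by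
    intro t
    have hsum : HasDerivAt (fun u => ∑ j ∈ Finset.range (mp + 1),
        K j / (α * r j) * (1 - Real.exp (-(α * r j * (y - (u - b) / α)))))
        (∑ j ∈ Finset.range (mp + 1),
          -(K j / α * Real.exp (-(α * r j * (y - (t - b) / α))))) t := by
      refine HasDerivAt.fun_sum fun j hj => ?_
      have h0 : HasDerivAt (fun u : ℝ => y - (u - b) / α) (-(1 / α)) t := by
        simpa using (((hasDerivAt_id t).sub_const b).div_const α).const_sub y
      have h1 := (h0.const_mul (α * r j)).neg.exp.const_sub 1
      have h2 := h1.const_mul (K j / (α * r j))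
      refine h2.congr_deriv ?_
      simp only [id_eq, Pi.neg_apply]
      have hrj := hrne j hj
      field_simp
    have hquad : HasDerivAt (fun u : ℝ => ((u - c) ^ 2 - (b - c) ^ 2) / (2 * α))
        ((t - c) / α) t := by
      have h1 := (((hasDerivAt_id t).sub_const c).pow 2).sub_const ((b - c) ^ 2)
      have h2 := h1.div_const (2 * α)
      refine h2.congr_deriv ?_
      simp only [id_eq, Pi.neg_apply]
      field_simp
      ring
    exact hsum.add hquad
  have hF3d : ∀ t : ℝ, HasDerivAt (fun u => (u - c) * y - α * y ^ 2 / 2) y t := by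
    intro t
    simpa using (((hasDerivAt_id t).sub_const c).mul_const y).sub_const (α * y ^ 2 / 2)
  have hG1d : ∀ t : ℝ, HasDerivAt
      (fun u => ∑ j ∈ Finset.range (mp + 1),
        K j / (α * r j) * (1 - Real.exp (-(α * r j * u))) * Real.exp (r j * (x - b)))
      (∑ j ∈ Finset.range (mp + 1),
        K j * Real.exp (-(α * r j * t)) * Real.exp (r j * (x - b))) t := by
    intro t
    refine HasDerivAt.fun_sum fun j hj => ?_
    have h1 := (((hasDerivAt_id t).const_mul (α * r j)).neg.exp.const_sub 1).const_mul
      (K j / (α * r j))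
    have h2 := h1.mul_const (Real.exp (r j * (x - b)))
    refine h2.congr_deriv ?_
    simp only [id_eq, Pi.neg_apply]
    have hrj := hrne j hj
    field_simp
  have hG2d : ∀ t : ℝ, HasDerivAt
      (fun u => (∑ j ∈ Finset.range (mp + 1),
        K j / (α * r j) * (1 - Real.exp (-(α * r j * (u - (x - b) / α)))))
        + ((x - c) ^ 2 - (b - c) ^ 2) / (2 * α))
      (∑ j ∈ Finset.range (mp + 1),
        K j * Real.exp (-(α * r j * (t - (x - b) / α)))) t := by
    intro t
    have hsum : HasDerivAt (fun u => ∑ j ∈ Finset.range (mp + 1),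
        K j / (α * r j) * (1 - Real.exp (-(α * r j * (u - (x - b) / α)))))
        (∑ j ∈ Finset.range (mp + 1),
          K j * Real.exp (-(α * r j * (t - (x - b) / α)))) t := by
      refine HasDerivAt.fun_sum fun j hj => ?_
      have h0 : HasDerivAt (fun u : ℝ => u - (x - b) / α) 1 t :=
        (hasDerivAt_id t).sub_const _
      have h1 := ((h0.const_mul (α * r j)).neg.exp.const_sub 1).const_mul (K j / (α * r j))
      refine h1.congr_deriv ?_
      simp only [id_eq, Pi.neg_apply]
      have hrj := hrne j hj
      field_simp
    simpa using hsum.add_const (((x - c) ^ 2 - (b - c) ^ 2) / (2 * α))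
  have hG3d : ∀ t : ℝ, HasDerivAt (fun u => (x - c) * u - α * u ^ 2 / 2)
      (x - c - α * t) t := by
    intro t
    have h1 := ((hasDerivAt_id t).const_mul (x - c)).sub
      ((((hasDerivAt_id t).pow 2).const_mul α).div_const 2)
    refine h1.congr_deriv ?_
    simp only [id_eq, Pi.neg_apply]
    field_simp
    ring
  -- piecewise descriptions of v
  have hveq1 : ∀ t, t < b → v t y = ∑ j ∈ Finset.range (mp + 1),
      K j / (α * r j) * (1 - Real.exp (-(α * r j * y))) * Real.exp (r j * (t - b)) := by
    intro t ht
    rw [hv t y, if_pos ht]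
  have hveq2 : ∀ t, ¬ t < b → t < α * y + b → v t y = (∑ j ∈ Finset.range (mp + 1),
      K j / (α * r j) * (1 - Real.exp (-(α * r j * (y - (t - b) / α)))))
      + ((t - c) ^ 2 - (b - c) ^ 2) / (2 * α) := by
    intro t ht ht2
    rw [hv t y, if_neg ht, if_pos ht2]
  have hveq3 : ∀ t, ¬ t < b → ¬ t < α * y + b → v t y = (t - c) * y - α * y ^ 2 / 2 := by
    intro t ht ht2
    rw [hv t y, if_neg ht, if_neg ht2]
  -- value matching at t = b
  have hv12 : (∑ j ∈ Finset.range (mp + 1),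
      K j / (α * r j) * (1 - Real.exp (-(α * r j * y))) * Real.exp (r j * (b - b)))
      = (∑ j ∈ Finset.range (mp + 1),
      K j / (α * r j) * (1 - Real.exp (-(α * r j * (y - (b - b) / α)))))
      + ((b - c) ^ 2 - (b - c) ^ 2) / (2 * α) := by
    simp
  -- derivative matching at t = b
  have hd12 : (∑ j ∈ Finset.range (mp + 1),
      K j / α * (1 - Real.exp (-(α * r j * y))) * Real.exp (r j * (b - b)))
      = (∑ j ∈ Finset.range (mp + 1),
        -(K j / α * Real.exp (-(α * r j * (y - (b - b) / α))))) + (b - c) / α := by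
    have h1 : ∀ j ∈ Finset.range (mp + 1),
        K j / α * (1 - Real.exp (-(α * r j * y))) * Real.exp (r j * (b - b))
          = -(K j / α * Real.exp (-(α * r j * (y - (b - b) / α)))) + K j / α := by
      intro j hj
      simp only [sub_self, zero_div, sub_zero, mul_zero, neg_zero, Real.exp_zero, mul_one]
      ring
    rw [Finset.sum_congr rfl h1, Finset.sum_add_distrib, ← Finset.sum_div, hKsum]
  -- value matching at t = α y + b
  have hyab : (α * y + b - b) / α = y := by field_simp; ring
  have hv23 : (∑ j ∈ Finset.range (mp + 1),
      K j / (α * r j) * (1 - Real.exp (-(α * r j * (y - (α * y + b - b) / α)))))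
      + ((α * y + b - c) ^ 2 - (b - c) ^ 2) / (2 * α)
      = (α * y + b - c) * y - α * y ^ 2 / 2 := by
    rw [hyab]
    have h1 : ∀ j ∈ Finset.range (mp + 1),
        K j / (α * r j) * (1 - Real.exp (-(α * r j * (y - y)))) = 0 := by
      intro j hj
      simp only [sub_self, mul_zero, neg_zero, Real.exp_zero]
    rw [Finset.sum_eq_zero h1, zero_add]
    field_simp
    ring
  -- derivative matching at t = α y + b
  have hd23 : (∑ j ∈ Finset.range (mp + 1),
      -(K j / α * Real.exp (-(α * r j * (y - (α * y + b - b) / α)))))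
      + (α * y + b - c) / α = y := by
    rw [hyab]
    have h1 : ∀ j ∈ Finset.range (mp + 1),
        -(K j / α * Real.exp (-(α * r j * (y - y)))) = K j * (-1 / α) := by
      intro j hj
      simp only [sub_self, mul_zero, neg_zero, Real.exp_zero]
      ring
    rw [Finset.sum_congr rfl h1, ← Finset.sum_mul, hKsum]
    field_simp
    ring
  rcases lt_or_ge x b with hxb | hxb
  · -- x < b
    refine ⟨∑ j ∈ Finset.range (mp + 1),
        K j / α * (1 - Real.exp (-(α * r j * y))) * Real.exp (r j * (x - b)),
      ∑ j ∈ Finset.range (mp + 1),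
        K j * Real.exp (-(α * r j * y)) * Real.exp (r j * (x - b)), ?_, ?_, ?_⟩
    · refine (hF1d x).congr_of_eventuallyEq ?_
      filter_upwards [Iio_mem_nhds hxb] with t ht
      exact hveq1 t ht
    · have hfun : (fun t => v x t) = fun t => ∑ j ∈ Finset.range (mp + 1),
          K j / (α * r j) * (1 - Real.exp (-(α * r j * t))) * Real.exp (r j * (x - b)) :=
        funext fun t => by rw [hv x t, if_pos hxb]
      rw [hfun]
      exact hG1d y
    · rw [if_pos hxb, Finset.mul_sum, ← Finset.sum_add_distrib]
      refine Finset.sum_congr rfl fun j hj => ?_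
      field_simp
      ring
  · have hxb' : ¬ x < b := not_lt.mpr hxb
    rcases lt_trichotomy x (α * y + b) with hxa | hxa | hxa
    · -- b ≤ x < α y + b
      have hty : (x - b) / α < y := by
        rw [div_lt_iff₀ hα]; linarith
      refine ⟨(∑ j ∈ Finset.range (mp + 1),
          -(K j / α * Real.exp (-(α * r j * (y - (x - b) / α))))) + (x - c) / α,
        ∑ j ∈ Finset.range (mp + 1),
          K j * Real.exp (-(α * r j * (y - (x - b) / α))), ?_, ?_, ?_⟩
      · rcases eq_or_lt_of_le hxb with heq | hlt
        · subst heq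
          have hIic : HasDerivWithinAt (fun t => v t y)
              ((∑ j ∈ Finset.range (mp + 1),
                -(K j / α * Real.exp (-(α * r j * (y - (b - b) / α))))) + (b - c) / α)
              (Set.Iic b) b := by
            have h := (hF1d b).hasDerivWithinAt (s := Set.Iic b)
            rw [hd12] at h
            refine h.congr (fun t ht => ?_) ?_
            · rcases lt_or_eq_of_le (Set.mem_Iic.mp ht) with h' | h'
              · exact hveq1 t h'
              · rw [h', hveq2 b (lt_irrefl b) hyb]
                exact hv12.symm
            · rw [hveq2 b (lt_irrefl b) hyb]
              exact hv12.symm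
          have hIcc : HasDerivWithinAt (fun t => v t y)
              ((∑ j ∈ Finset.range (mp + 1),
                -(K j / α * Real.exp (-(α * r j * (y - (b - b) / α))))) + (b - c) / α)
              (Set.Icc b (α * y + b)) b := by
            have h := (hF2d b).hasDerivWithinAt (s := Set.Icc b (α * y + b))
            refine h.congr (fun t ht => ?_) ?_
            · rcases lt_or_eq_of_le (Set.mem_Icc.mp ht).2 with h' | h'
              · exact hveq2 t (not_lt.mpr (Set.mem_Icc.mp ht).1) h'
              · rw [h', hveq3 (α * y + b) (not_lt.mpr (le_of_lt hyb)) (lt_irrefl _)]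
                exact hv23.symm
            · exact hveq2 b (lt_irrefl b) hyb
          have hu := hIic.union hIcc
          rw [Set.Iic_union_Icc_eq_Iic (le_of_lt hyb)] at hu
          exact hu.hasDerivAt (Iic_mem_nhds hyb)
        · refine (hF2d x).congr_of_eventuallyEq ?_
          filter_upwards [Ioo_mem_nhds hlt hxa] with t ht
          exact hveq2 t (not_lt.mpr (le_of_lt ht.1)) ht.2
      · refine (hG2d y).congr_of_eventuallyEq ?_
        filter_upwards [Ioi_mem_nhds hty] with t ht
        have hxt : x < α * t + b := by
          have := (div_lt_iff₀ hα).mp ht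
          linarith
        rw [hv x t, if_neg hxb', if_pos hxt]
      · rw [if_neg hxb', mul_add, Finset.mul_sum]
        have hcomb : (∑ j ∈ Finset.range (mp + 1),
            α * -(K j / α * Real.exp (-(α * r j * (y - (x - b) / α)))))
            + ∑ j ∈ Finset.range (mp + 1),
              K j * Real.exp (-(α * r j * (y - (x - b) / α))) = 0 := by
          rw [← Finset.sum_add_distrib]
          refine Finset.sum_eq_zero fun j hj => ?_
          have hcan : α * (K j / α) = K j := by field_simp
          rw [mul_neg, ← mul_assoc, hcan]
          exact neg_add_cancel _
        have hxc : α * ((x - c) / α) = x - c := by field_simp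
        linarith
    · -- x = α y + b
      subst hxa
      refine ⟨y, α * y + b - c - α * y, ?_, ?_, ?_⟩
      · have hIcc : HasDerivWithinAt (fun t => v t y) y
            (Set.Icc b (α * y + b)) (α * y + b) := by
          have h := (hF2d (α * y + b)).hasDerivWithinAt (s := Set.Icc b (α * y + b))
          rw [hd23] at h
          refine h.congr (fun t ht => ?_) ?_
          · rcases lt_or_eq_of_le (Set.mem_Icc.mp ht).2 with h' | h'
            · exact hveq2 t (not_lt.mpr (Set.mem_Icc.mp ht).1) h'
            · rw [h', hveq3 (α * y + b) (not_lt.mpr (le_of_lt hyb)) (lt_irrefl _)]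
              exact hv23.symm
          · rw [hveq3 (α * y + b) (not_lt.mpr (le_of_lt hyb)) (lt_irrefl _)]
            exact hv23.symm
        have hIci : HasDerivWithinAt (fun t => v t y) y
            (Set.Ici (α * y + b)) (α * y + b) := by
          have h := (hF3d (α * y + b)).hasDerivWithinAt (s := Set.Ici (α * y + b))
          refine h.congr (fun t ht => ?_) ?_
          · exact hveq3 t (not_lt.mpr (by linarith [Set.mem_Ici.mp ht]))
              (not_lt.mpr (Set.mem_Ici.mp ht))
          · exact hveq3 _ (not_lt.mpr (le_of_lt hyb)) (lt_irrefl _)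
        have hu := hIcc.union hIci
        rw [Set.Icc_union_Ici_eq_Ici (le_of_lt hyb)] at hu
        exact hu.hasDerivAt (Ici_mem_nhds hyb)
      · have hIic : HasDerivWithinAt (fun t => v (α * y + b) t)
            (α * y + b - c - α * y) (Set.Iic y) y := by
          have h := (hG3d y).hasDerivWithinAt (s := Set.Iic y)
          refine h.congr (fun t ht => ?_) ?_
          · have h2 : ¬ α * y + b < α * t + b := by
              have : α * t ≤ α * y :=
                mul_le_mul_of_nonneg_left (Set.mem_Iic.mp ht) (le_of_lt hα)
              linarith
            rw [hv _ t, if_neg (not_lt.mpr (le_of_lt hyb)), if_neg h2]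
          · rw [hv _ y, if_neg (not_lt.mpr (le_of_lt hyb)), if_neg (lt_irrefl _)]
        have hIci : HasDerivWithinAt (fun t => v (α * y + b) t)
            (α * y + b - c - α * y) (Set.Ici y) y := by
          have h := (hG2d y).hasDerivWithinAt (s := Set.Ici y)
          have hval : ∑ j ∈ Finset.range (mp + 1),
              K j * Real.exp (-(α * r j * (y - (α * y + b - b) / α)))
              = α * y + b - c - α * y := by
            have h1 : ∀ j ∈ Finset.range (mp + 1),
                K j * Real.exp (-(α * r j * (y - (α * y + b - b) / α))) = K j := by
              intro j hj
              rw [hyab]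
              simp
            rw [Finset.sum_congr rfl h1, hKsum]
            ring
          rw [hval] at h
          refine h.congr (fun t ht => ?_) ?_
          · rcases lt_or_eq_of_le (Set.mem_Ici.mp ht) with h' | h'
            · have hxt : α * y + b < α * t + b := by nlinarith
              rw [hv _ t, if_neg (not_lt.mpr (le_of_lt hyb)), if_pos hxt]
            · rw [← h', hv _ y, if_neg (not_lt.mpr (le_of_lt hyb)), if_neg (lt_irrefl _)]
              exact hv23.symm
          · rw [hv _ y, if_neg (not_lt.mpr (le_of_lt hyb)), if_neg (lt_irrefl _)]
            exact hv23.symm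
        have hu := hIic.union hIci
        rw [Set.Iic_union_Ici] at hu
        exact hasDerivWithinAt_univ.mp hu
      · rw [if_neg hxb']
        ring
    · -- x > α y + b
      have hty : y < (x - b) / α := by
        rw [lt_div_iff₀ hα]; linarith
      refine ⟨y, x - c - α * y, ?_, ?_, ?_⟩
      · refine (hF3d x).congr_of_eventuallyEq ?_
        filter_upwards [Ioi_mem_nhds hxa] with t ht
        exact hveq3 t (not_lt.mpr (by linarith [Set.mem_Ioi.mp ht]))
          (not_lt.mpr (le_of_lt (Set.mem_Ioi.mp ht)))
      · refine (hG3d y).congr_of_eventuallyEq ?_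
        filter_upwards [Iio_mem_nhds hty] with t ht
        have h2 : ¬ x < α * t + b := by
          have := (lt_div_iff₀ hα).mp ht
          exact not_lt.mpr (by linarith)
        rw [hv x t, if_neg hxb', if_neg h2]
      · rw [if_neg hxb']
        ring
end

section
/- The function v is continuous on ℝ × [0,∞); for every y > 0 the map x ↦ v(x,y) is twice continuously differentiable on ℝ; for every x ∈ ℝ the map y ↦ v(x,y) is continuously differentiable on (0,∞); and v(x,0) = 0 for every x ∈ ℝ. -/
open Finset Matrix MeasureTheory

lemma cont_glue {f : ℝ → ℝ} {b : ℝ} (hf : Continuous f) (h0 : f b = 0) :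
    Continuous fun t => if t < b then f t else 0 := by
  have h : (fun t => if t < b then f t else 0) = fun t => f (min t b) := by
    funext t
    rcases lt_or_ge t b with h | h
    · simp [h, min_eq_left h.le]
    · simp [not_lt.2 h, min_eq_right h, h0]
  rw [h]
  exact hf.comp (continuous_id.min continuous_const)

lemma hasDerivAt_glue {f f' : ℝ → ℝ} {b : ℝ}
    (hf : ∀ t, HasDerivAt f (f' t) t) (h0 : f b = 0) (h1 : f' b = 0) (t : ℝ) :
    HasDerivAt (fun s => if s < b then f s else 0) (if t < b then f' t else 0) t := by
  rcases lt_trichotomy t b with h | h | h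
  · rw [if_pos h]
    exact (hf t).congr_of_eventuallyEq
      (by filter_upwards [Iio_mem_nhds h] with s hs; simp [Set.mem_Iio.1 hs])
  · subst h
    rw [if_neg (lt_irrefl t)]
    have hl : HasDerivWithinAt (fun s => if s < t then f s else 0) 0 (Set.Iic t) t := by
      have h2 := (hf t).hasDerivWithinAt (s := Set.Iic t)
      rw [h1] at h2
      refine h2.congr ?_ (by simp [h0])
      intro s hs
      rcases eq_or_lt_of_le (Set.mem_Iic.1 hs) with h' | h'
      · subst h'; simp [h0]
      · simp [h']
    have hr : HasDerivWithinAt (fun s => if s < t then f s else 0) 0 (Set.Ici t) t := by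
      refine (hasDerivWithinAt_const t _ (0 : ℝ)).congr ?_ (by simp)
      intro s hs
      simp [not_lt.2 (Set.mem_Ici.1 hs)]
    have hu := hl.union hr
    rw [Set.Iic_union_Ici] at hu
    exact hasDerivWithinAt_univ.1 hu
  · rw [if_neg (not_lt.2 h.le)]
    exact (hasDerivAt_const t (0 : ℝ)).congr_of_eventuallyEq
      (by filter_upwards [Ioi_mem_nhds h] with s hs; simp [not_lt.2 (le_of_lt (Set.mem_Ioi.1 hs))])

lemma contDiff_glue {f f' f'' : ℝ → ℝ} {b : ℝ}
    (hf : ∀ t, HasDerivAt f (f' t) t) (hf' : ∀ t, HasDerivAt f' (f'' t) t)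
    (hcont : Continuous f'') (h0 : f b = 0) (h1 : f' b = 0) (h2 : f'' b = 0) :
    ContDiff ℝ 2 (fun t => if t < b then f t else 0) := by
  have hd1 := hasDerivAt_glue hf h0 h1
  have hd2 := hasDerivAt_glue hf' h1 h2
  have hc : Continuous fun t => if t < b then f'' t else 0 := cont_glue hcont h2
  have e1 : deriv (fun s => if s < b then f s else 0) = fun t => if t < b then f' t else 0 :=
    funext fun t => (hd1 t).deriv
  have e2 : deriv (fun s => if s < b then f' s else 0) = fun t => if t < b then f'' t else 0 :=
    funext fun t => (hd2 t).deriv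
  have : (2 : WithTop ℕ∞) = 1 + 1 := by norm_num
  rw [this, contDiff_succ_iff_deriv]
  refine ⟨fun t => (hd1 t).differentiableAt, by simp, ?_⟩
  rw [e1, contDiff_one_iff_deriv, e2]
  exact ⟨fun t => (hd2 t).differentiableAt, hc⟩

section PolyAux
open Polynomial

lemma derivative_finset_prod {ι : Type*} [DecidableEq ι] (s : Finset ι) (f : ι → Polynomial ℝ) :
    derivative (∏ i ∈ s, f i) = ∑ i ∈ s, (∏ j ∈ s.erase i, f j) * derivative (f i) := by
  induction s using Finset.induction_on with
  | empty => simp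
  | insert a s' ha ih =>
    rw [Finset.prod_insert ha, derivative_mul, ih, Finset.sum_insert ha]
    rw [Finset.erase_insert ha, Finset.mul_sum]
    congr 1
    · ring
    · refine Finset.sum_congr rfl fun i hi => ?_
      rw [Finset.erase_insert_of_ne (by rintro rfl; exact ha hi)]
      rw [Finset.prod_insert (fun h => ha (Finset.mem_of_mem_erase h))]
      ring

lemma key_identities (n : ℕ) (hn : 1 ≤ n) (r : Fin (n+1) → ℝ) (β : ℕ → ℝ) (z : Fin (n+1) → ℝ)
    (hr : ∀ j, r j ≠ 0) (hβ0 : ∀ i ∈ Finset.Icc 1 n, β i ≠ 0)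
    (hβr : ∀ i ∈ Finset.Icc 1 n, ∀ j, β i ≠ r j)
    (hβinj : Set.InjOn β (Finset.Icc 1 n))
    (hz1 : ∑ j, z j = 1)
    (hz2 : ∀ i ∈ Finset.Icc 1 n, ∑ j, z j / (β i - r j) = 0) :
    (∑ j, z j / r j) * (∏ j, r j) = (∏ i ∈ Finset.Icc 1 n, β i) ∧
    (∑ j, z j / (r j)^2) * (∏ j, r j) = (∏ i ∈ Finset.Icc 1 n, β i) *
      ((∑ j, 1 / r j) - ∑ i ∈ Finset.Icc 1 n, 1 / β i) := by
  classical
  set P : Polynomial ℝ := ∑ j : Fin (n+1), C (z j) * ∏ k ∈ Finset.univ.erase j, (X - C (r k))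
    with hP
  set Q : Polynomial ℝ := ∏ i ∈ Finset.Icc 1 n, (X - C (β i)) with hQ
  -- basic facts about products of (X - C a)
  have hmonic : ∀ (s : Finset (Fin (n+1))), (∏ k ∈ s, (X - C (r k))).Monic :=
    fun s => monic_prod_of_monic _ _ fun k _ => monic_X_sub_C _
  have hdeg : ∀ (s : Finset (Fin (n+1))), (∏ k ∈ s, (X - C (r k))).natDegree = s.card := by
    intro s
    rw [natDegree_prod_of_monic _ _ fun k _ => monic_X_sub_C _]
    simp
  have hQmonic : Q.Monic := monic_prod_of_monic _ _ fun k _ => monic_X_sub_C _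
  have hQdeg : Q.natDegree = n := by
    rw [hQ, natDegree_prod_of_monic _ _ fun k _ => monic_X_sub_C _]
    simp
  have hcard : ∀ j : Fin (n+1), (Finset.univ.erase j).card = n := by
    intro j
    rw [Finset.card_erase_of_mem (Finset.mem_univ j), Finset.card_univ, Fintype.card_fin]
    omega
  have hPdeg : P.natDegree ≤ n := by
    refine natDegree_sum_le_of_forall_le _ _ fun j _ => ?_
    refine le_trans (natDegree_C_mul_le _ _) ?_
    rw [hdeg, hcard]
  have hPcoeff : P.coeff n = 1 := by
    rw [hP, finset_sum_coeff]
    have : ∀ j : Fin (n+1),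
        (C (z j) * ∏ k ∈ Finset.univ.erase j, (X - C (r k))).coeff n = z j := by
      intro j
      rw [coeff_C_mul]
      have h1 : (∏ k ∈ Finset.univ.erase j, (X - C (r k))).coeff n = 1 := by
        have := (hmonic (Finset.univ.erase j)).coeff_natDegree
        rwa [hdeg, hcard] at this
      rw [h1, mul_one]
    rw [Finset.sum_congr rfl fun j _ => this j, hz1]
  have hQcoeff : Q.coeff n = 1 := by
    have := hQmonic.coeff_natDegree
    rwa [hQdeg] at this
  -- the key polynomial identity
  have hPQ : P = Q := by
    have hD : P - Q = 0 := by
      refine eq_zero_of_natDegree_lt_card_of_eval_eq_zero' _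
        ((Finset.Icc 1 n).image β) ?_ ?_
      · intro x hx
        obtain ⟨i, hi, rfl⟩ := Finset.mem_image.1 hx
        have hne : ∀ j : Fin (n+1), β i - r j ≠ 0 :=
          fun j => sub_ne_zero.2 (hβr i hi j)
        have hevalP : P.eval (β i) = 0 := by
          rw [hP]
          rw [eval_finset_sum]
          have hterm : ∀ j : Fin (n+1),
              (C (z j) * ∏ k ∈ Finset.univ.erase j, (X - C (r k))).eval (β i)
                = (z j / (β i - r j)) * ∏ k : Fin (n+1), (β i - r k) := by
            intro j
            rw [eval_mul, eval_C, eval_prod]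
            simp only [eval_sub, eval_X, eval_C]
            rw [← Finset.mul_prod_erase Finset.univ (fun k => β i - r k) (Finset.mem_univ j)]
            rw [div_mul_eq_mul_div, eq_div_iff (hne j)]
            ring
          rw [Finset.sum_congr rfl fun j _ => hterm j, ← Finset.sum_mul]
          rw [hz2 i hi, zero_mul]
        have hevalQ : Q.eval (β i) = 0 := by
          rw [hQ, eval_prod]
          refine Finset.prod_eq_zero hi ?_
          simp
        rw [eval_sub, hevalP, hevalQ, sub_zero]
      · have h1 : (P - Q).natDegree ≤ n - 1 := by
          rw [natDegree_le_iff_coeff_eq_zero]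
          intro N hN
          rcases eq_or_lt_of_le (Nat.succ_le_of_lt hN) with h | h
          · have hNn : N = n := by omega
            rw [coeff_sub, hNn, hPcoeff, hQcoeff, sub_self]
          · have hNn : n < N := by omega
            rw [coeff_sub, coeff_eq_zero_of_natDegree_lt (lt_of_le_of_lt hPdeg hNn),
              coeff_eq_zero_of_natDegree_lt (by omega : Q.natDegree < N), sub_self]
        have h2 : ((Finset.Icc 1 n).image β).card = n := by
          rw [Finset.card_image_of_injOn hβinj]
          simp
        rw [h2]
        omega
    exact sub_eq_zero.1 hD
  -- notation for negated products
  have hrne : ∀ j : Fin (n+1), (-(r j)) ≠ 0 := fun j => neg_ne_zero.2 (hr j)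
  set Nr : ℝ := ∏ j : Fin (n+1), (-(r j)) with hNr
  set Nβ : ℝ := ∏ i ∈ Finset.Icc 1 n, (-(β i)) with hNβ
  have hErase : ∀ j : Fin (n+1), ∏ k ∈ Finset.univ.erase j, (-(r k)) = Nr / (-(r j)) := by
    intro j
    rw [eq_div_iff (hrne j), hNr]
    exact Finset.prod_erase_mul _ _ (Finset.mem_univ j)
  have hErase2 : ∀ j l : Fin (n+1), l ≠ j →
      ∏ k ∈ (Finset.univ.erase j).erase l, (-(r k)) = Nr / (-(r j)) / (-(r l)) := by
    intro j l hlj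
    rw [eq_div_iff (hrne l), ← hErase j]
    exact Finset.prod_erase_mul _ _ (Finset.mem_erase.2 ⟨hlj, Finset.mem_univ l⟩)
  have hEraseβ : ∀ i ∈ Finset.Icc 1 n, ∏ i' ∈ (Finset.Icc 1 n).erase i, (-(β i')) = Nβ / (-(β i)) := by
    intro i hi
    rw [eq_div_iff (neg_ne_zero.2 (hβ0 i hi)), hNβ]
    exact Finset.prod_erase_mul _ _ hi
  -- evaluation of the identity at 0
  have hEv0 : ∑ j : Fin (n+1), z j * ∏ k ∈ Finset.univ.erase j, (-(r k))
      = ∏ i ∈ Finset.Icc 1 n, (-(β i)) := by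
    have h := congrArg (eval 0) hPQ
    simpa only [hP, hQ, eval_finset_sum, eval_mul, eval_C, eval_prod, eval_sub, eval_X,
      zero_sub] using h
  have hC1' : ∑ j : Fin (n+1), z j * (Nr / (-(r j))) = Nβ := by
    rw [hNβ, ← hEv0]
    exact Finset.sum_congr rfl fun j _ => by rw [hErase j]
  -- sign bookkeeping
  have hNreq : Nr = (-1 : ℝ)^(n+1) * ∏ j : Fin (n+1), r j := by
    rw [hNr]
    calc ∏ j : Fin (n+1), (-(r j)) = ∏ j : Fin (n+1), ((-1 : ℝ) * r j) := by
          refine Finset.prod_congr rfl fun j _ => by ring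
      _ = (∏ _j : Fin (n+1), (-1 : ℝ)) * ∏ j : Fin (n+1), r j := Finset.prod_mul_distrib
      _ = (-1 : ℝ)^(n+1) * ∏ j : Fin (n+1), r j := by
          rw [Finset.prod_const, Finset.card_univ, Fintype.card_fin]
  have hNβeq : Nβ = (-1 : ℝ)^n * ∏ i ∈ Finset.Icc 1 n, β i := by
    rw [hNβ]
    calc ∏ i ∈ Finset.Icc 1 n, (-(β i)) = ∏ i ∈ Finset.Icc 1 n, ((-1 : ℝ) * β i) := by
          refine Finset.prod_congr rfl fun i _ => by ring
      _ = (∏ _i ∈ Finset.Icc 1 n, (-1 : ℝ)) * ∏ i ∈ Finset.Icc 1 n, β i :=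
          Finset.prod_mul_distrib
      _ = (-1 : ℝ)^n * ∏ i ∈ Finset.Icc 1 n, β i := by
          rw [Finset.prod_const, Nat.card_Icc]
          norm_num
  -- first identity
  have hSzr : -Nr * (∑ j : Fin (n+1), z j / r j) = Nβ := by
    rw [← hC1', Finset.mul_sum]
    refine Finset.sum_congr rfl fun j _ => ?_
    rw [div_neg]
    ring
  have hC1 : (∑ j : Fin (n+1), z j / r j) * (∏ j : Fin (n+1), r j)
      = ∏ i ∈ Finset.Icc 1 n, β i := by
    refine mul_left_cancel₀ (pow_ne_zero n (by norm_num : (-1:ℝ) ≠ 0)) ?_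
    rw [hNreq, hNβeq] at hSzr
    linear_combination hSzr
  refine ⟨hC1, ?_⟩
  -- derivative evaluated at 0
  have hEvD : ∑ j : Fin (n+1), z j *
        ∑ l ∈ Finset.univ.erase j, ∏ k ∈ (Finset.univ.erase j).erase l, (-(r k))
      = ∑ i ∈ Finset.Icc 1 n, ∏ i' ∈ (Finset.Icc 1 n).erase i, (-(β i')) := by
    have h := congrArg (fun p : Polynomial ℝ => eval 0 (derivative p)) hPQ
    simp only [hP, hQ] at h
    simpa only [derivative_sum, derivative_C_mul, derivative_finset_prod, derivative_X_sub_C,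
      mul_one, eval_finset_sum, eval_mul, eval_C, eval_prod, eval_sub, eval_X, zero_sub] using h
  set Sr : ℝ := ∑ l : Fin (n+1), 1 / (-(r l)) with hSr
  set Sβ : ℝ := ∑ i ∈ Finset.Icc 1 n, 1 / (-(β i)) with hSβ
  have hLHS : ∑ j : Fin (n+1), z j *
        ∑ l ∈ Finset.univ.erase j, ∏ k ∈ (Finset.univ.erase j).erase l, (-(r k))
      = Sr * Nβ - Nr * ∑ j : Fin (n+1), z j / (r j)^2 := by
    have hinner : ∀ j : Fin (n+1),
        ∑ l ∈ Finset.univ.erase j, ∏ k ∈ (Finset.univ.erase j).erase l, (-(r k))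
          = Nr / (-(r j)) * (Sr - 1 / (-(r j))) := by
      intro j
      have h1 : ∀ l ∈ Finset.univ.erase j,
          ∏ k ∈ (Finset.univ.erase j).erase l, (-(r k))
            = Nr / (-(r j)) * (1 / (-(r l))) := by
        intro l hl
        rw [hErase2 j l (Finset.mem_erase.1 hl).1]
        field_simp
      rw [Finset.sum_congr rfl h1, ← Finset.mul_sum,
        Finset.sum_erase_eq_sub (Finset.mem_univ j)]
    have h2 : ∀ j : Fin (n+1),
        z j * (Nr / (-(r j)) * (Sr - 1 / (-(r j))))
          = Sr * (z j * (Nr / (-(r j)))) - Nr * (z j / (r j)^2) := by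
      intro j
      have hrj := hr j
      field_simp
      ring
    rw [Finset.sum_congr rfl fun j _ => by rw [hinner j, h2 j],
      Finset.sum_sub_distrib, ← Finset.mul_sum, ← Finset.mul_sum, hC1']
  have hRHS : ∑ i ∈ Finset.Icc 1 n, ∏ i' ∈ (Finset.Icc 1 n).erase i, (-(β i'))
      = Nβ * Sβ := by
    rw [hSβ, Finset.mul_sum]
    refine Finset.sum_congr rfl fun i hi => ?_
    rw [hEraseβ i hi]
    field_simp
  rw [hLHS, hRHS] at hEvD
  -- convert the negated harmonic sums
  have hSrEq : Sr = -∑ l : Fin (n+1), 1 / r l := by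
    rw [hSr, ← Finset.sum_neg_distrib]
    exact Finset.sum_congr rfl fun l _ => by rw [div_neg]
  have hSβEq : Sβ = -∑ i ∈ Finset.Icc 1 n, 1 / β i := by
    rw [hSβ, ← Finset.sum_neg_distrib]
    exact Finset.sum_congr rfl fun i _ => by rw [div_neg]
  refine mul_left_cancel₀ (pow_ne_zero (n+1) (by norm_num : (-1:ℝ) ≠ 0)) ?_
  rw [hSrEq, hSβEq, hNreq, hNβeq] at hEvD
  linear_combination -hEvD

end PolyAux


lemma cof_row_expand {n : ℕ} (M : Matrix (Fin (n + 1)) (Fin (n + 1)) ℝ) :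
    ∑ j : Fin (n + 1), M 0 j * cof M 0 j = M.det := by
  rw [Matrix.det_succ_row_zero]
  refine Finset.sum_congr rfl fun j _ => ?_
  simp only [cof, Fin.succAbove_zero, Fin.val_zero, zero_add]
  ring

lemma cof_row_orth {n : ℕ} (M : Matrix (Fin (n + 1)) (Fin (n + 1)) ℝ)
    (i : Fin (n + 1)) (hi : i ≠ 0) :
    ∑ j : Fin (n + 1), M i j * cof M 0 j = 0 := by
  classical
  set B : Matrix (Fin (n + 1)) (Fin (n + 1)) ℝ := M.updateRow 0 (M i) with hB
  have hdet : B.det = 0 := by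
    refine Matrix.det_zero_of_row_eq (Ne.symm hi) ?_
    rw [hB, Matrix.updateRow_self, Matrix.updateRow_ne hi]
  have hexp := cof_row_expand B
  have h1 : ∀ j, B 0 j = M i j := by
    intro j; rw [hB, Matrix.updateRow_self]
  have h2 : ∀ j : Fin (n + 1), cof B 0 j = cof M 0 j := by
    intro j
    have hsub : B.submatrix (Fin.succAbove 0) j.succAbove
        = M.submatrix (Fin.succAbove 0) j.succAbove := by
      ext k l
      simp only [Matrix.submatrix_apply, Fin.succAbove_zero]
      rw [hB, Matrix.updateRow_ne (Fin.succ_ne_zero k)]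
    simp only [cof, hsub]
  rw [hdet] at hexp
  rw [← hexp]
  exact Finset.sum_congr rfl fun j _ => by rw [h1 j, h2 j]

lemma chain_lt {f : ℕ → ℝ} {a N : ℕ} (h : ∀ k, a ≤ k → k < N → f k < f (k + 1)) :
    ∀ k l, a ≤ k → k < l → l ≤ N → f k < f l := by
  intro k l hak
  induction l with
  | zero => omega
  | succ l ih =>
    intro hkl hlN
    rcases Nat.lt_or_ge k l with h' | h'
    · exact lt_trans (ih h' (by omega)) (h l (by omega) (by omega))
    · have hkeq : k = l := by omega
      subst hkeq
      exact h k hak (by omega)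

set_option maxHeartbeats 1000000 in
theorem stmt12 (σ μ ρ lamn lamp c : ℝ)
    (hσ : 0 < σ) (hρ : 0 < ρ) (hlamn : 0 < lamn) (hlamp : 0 < lamp) (hc : 0 < c)
    (mp mn : ℕ) (hmp : 1 ≤ mp) (hmn : 1 ≤ mn)
    (ωp βp ωn βn : ℕ → ℝ)
    (hωp : ∀ k, 1 ≤ k → k ≤ mp → 0 < ωp k)
    (hωpsum : ∑ k ∈ Finset.Icc 1 mp, ωp k = 1)
    (hβp1 : 0 < βp 1)
    (hβpmono : ∀ k, 1 ≤ k → k < mp → βp k < βp (k + 1))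
    (hωn : ∀ k, 1 ≤ k → k ≤ mn → 0 < ωn k)
    (hωnsum : ∑ k ∈ Finset.Icc 1 mn, ωn k = 1)
    (hβn1 : 0 < βn 1)
    (hβnmono : ∀ k, 1 ≤ k → k < mn → βn k < βn (k + 1))
    (r : ℕ → ℝ)
    (hroot : ∀ j, j ≤ mp →
      σ ^ 2 * (r j) ^ 2 / 2 + μ * r j - (ρ + lamn + lamp)
        + lamp * ∑ i ∈ Finset.Icc 1 mp, ωp i * βp i / (βp i - r j)
        + lamn * ∑ i ∈ Finset.Icc 1 mn, ωn i * βn i / (r j + βn i) = 0)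
    (hr0 : 0 < r 0)
    (hinter : ∀ k, 1 ≤ k → k ≤ mp → r (k - 1) < βp k ∧ βp k < r k)
    (A : Matrix (Fin (mp + 1)) (Fin (mp + 1)) ℝ)
    (hA : ∀ i j : Fin (mp + 1), A i j = if (i : ℕ) = 0 then 1 else βp i / (βp i - r j))
    (hdet : A.det ≠ 0)
    (R : ℝ)
    (hR : R = (∏ k ∈ Finset.range (mp + 1), r k) / ∏ k ∈ Finset.Icc 1 mp, βp k)
    (K : ℕ → ℝ)
    (hK : ∀ j : Fin (mp + 1), K j = R * cof A 0 j / ((r j) ^ 2 * A.det))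
    (b : ℝ)
    (hb : b = c + (∑ i ∈ Finset.range (mp + 1), 1 / r i) - ∑ i ∈ Finset.Icc 1 mp, 1 / βp i)
    (α : ℝ) (hα : 0 < α)
    (v : ℝ → ℝ → ℝ)
    (hv : ∀ x y : ℝ,
      v x y =
        if x < b then
          ∑ j ∈ Finset.range (mp + 1),
            K j / (α * r j) * (1 - Real.exp (-(α * r j * y))) * Real.exp (r j * (x - b))
        else if x < α * y + b then
          (∑ j ∈ Finset.range (mp + 1),
            K j / (α * r j) * (1 - Real.exp (-(α * r j * (y - (x - b) / α)))))
            + ((x - c) ^ 2 - (b - c) ^ 2) / (2 * α)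
        else (x - c) * y - α * y ^ 2 / 2)
    :
    ContinuousOn (fun q : ℝ × ℝ => v q.1 q.2) {q : ℝ × ℝ | 0 ≤ q.2} ∧
    (∀ y : ℝ, 0 < y → ContDiff ℝ 2 (fun x => v x y)) ∧
    (∀ x : ℝ, ContDiffOn ℝ 1 (fun y => v x y) (Set.Ioi 0)) ∧
    (∀ x : ℝ, v x 0 = 0) := by
  classical
  have hα' : α ≠ 0 := ne_of_gt hα
  -- positivity and ordering facts
  have hβpos : ∀ k, 1 ≤ k → k ≤ mp → 0 < βp k := by
    intro k hk1 hkm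
    rcases eq_or_lt_of_le hk1 with h | h
    · rw [← h]; exact hβp1
    · exact hβp1.trans (chain_lt hβpmono 1 k le_rfl h hkm)
  have hrstep : ∀ k, 0 ≤ k → k < mp → r k < r (k + 1) := by
    intro k _ hk
    have h := hinter (k + 1) (by omega) (by omega)
    have he : (k + 1) - 1 = k := by omega
    rw [he] at h
    exact h.1.trans h.2
  have hrlt : ∀ j k, j < k → k ≤ mp → r j < r k := fun j k hjk hk =>
    chain_lt hrstep j k (Nat.zero_le j) hjk hk
  have hrle : ∀ j k, j ≤ k → k ≤ mp → r j ≤ r k := by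
    intro j k hjk hk
    rcases eq_or_lt_of_le hjk with h | h
    · rw [h]
    · exact (hrlt j k h hk).le
  have hrpos : ∀ j, j ≤ mp → 0 < r j := by
    intro j hj
    rcases Nat.eq_zero_or_pos j with h | h
    · rw [h]; exact hr0
    · exact hr0.trans (hrlt 0 j h hj)
  have hβrne : ∀ i, 1 ≤ i → i ≤ mp → ∀ j, j ≤ mp → βp i ≠ r j := by
    intro i h1 h2 j hj
    rcases Nat.lt_or_ge j i with h | h
    · have h3 : r j ≤ r (i - 1) := hrle j (i - 1) (by omega) (by omega)
      have h4 := (hinter i h1 h2).1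
      exact (lt_of_le_of_lt h3 h4).ne'
    · have h4 := (hinter i h1 h2).2
      have h3 : r i ≤ r j := hrle i j h hj
      exact (h4.trans_le h3).ne
  have hβinj : Set.InjOn βp ↑(Finset.Icc 1 mp) := by
    intro i hi j hj hij
    simp only [Finset.coe_Icc, Set.mem_Icc] at hi hj
    by_contra hne
    rcases Nat.lt_or_ge i j with h | h
    · exact absurd hij (ne_of_lt (chain_lt hβpmono i j hi.1 h hj.2))
    · have h' : j < i := by omega
      exact absurd hij.symm (ne_of_lt (chain_lt hβpmono j i hj.1 h' hi.2))
  have hjle : ∀ j : Fin (mp + 1), (j : ℕ) ≤ mp := fun j => Nat.lt_succ_iff.1 j.isLt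
  have hrneF : ∀ j : Fin (mp + 1), r (j : ℕ) ≠ 0 := fun j => ne_of_gt (hrpos _ (hjle j))
  -- the cofactor vector
  set z : Fin (mp + 1) → ℝ := fun j => cof A 0 j / A.det with hzdef
  have hz1 : ∑ j : Fin (mp + 1), z j = 1 := by
    have hA0 : ∀ j : Fin (mp + 1), A 0 j = 1 := by
      intro j
      rw [hA]
      simp
    have h := cof_row_expand A
    rw [Finset.sum_congr rfl (fun j _ => by rw [hA0 j, one_mul])] at h
    simp only [hzdef]
    rw [← Finset.sum_div, h, div_self hdet]
  have hz2 : ∀ i ∈ Finset.Icc 1 mp, ∑ j : Fin (mp + 1), z j / (βp i - r (j : ℕ)) = 0 := by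
    intro i hi
    obtain ⟨hi1, hi2⟩ := Finset.mem_Icc.1 hi
    have hilt : i < mp + 1 := by omega
    set iF : Fin (mp + 1) := ⟨i, hilt⟩ with hiFdef
    have hiF0 : iF ≠ 0 := by
      intro h
      have h' : (iF : ℕ) = 0 := by rw [h]; rfl
      rw [hiFdef] at h'
      simp at h'
      omega
    have horth := cof_row_orth A iF hiF0
    have hAi : ∀ j : Fin (mp + 1), A iF j = βp i / (βp i - r (j : ℕ)) := by
      intro j
      rw [hA]
      have hval : (iF : ℕ) = i := rfl
      rw [hval, if_neg (by omega)]
    have h2 : ∑ j : Fin (mp + 1), βp i * (cof A 0 j / (βp i - r (j : ℕ))) = 0 := by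
      rw [← horth]
      refine Finset.sum_congr rfl fun j _ => ?_
      rw [hAi j, div_mul_eq_mul_div, mul_div_assoc]
    rw [← Finset.mul_sum] at h2
    have h3 := (mul_eq_zero.1 h2).resolve_left (ne_of_gt (hβpos i hi1 hi2))
    simp only [hzdef]
    rw [Finset.sum_congr rfl fun j _ => div_right_comm (cof A 0 j) A.det (βp i - r (j : ℕ)),
      ← Finset.sum_div, h3, zero_div]
  obtain ⟨hI2', hI1'⟩ := key_identities mp hmp (fun j => r (j : ℕ)) βp z hrneF
    (fun i hi => ne_of_gt (hβpos i (Finset.mem_Icc.1 hi).1 (Finset.mem_Icc.1 hi).2))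
    (fun i hi j => hβrne i (Finset.mem_Icc.1 hi).1 (Finset.mem_Icc.1 hi).2 (j : ℕ) (hjle j))
    hβinj hz1 hz2
  have hPr : (0 : ℝ) < ∏ j : Fin (mp + 1), r (j : ℕ) :=
    Finset.prod_pos fun j _ => hrpos _ (hjle j)
  have hPβ : (0 : ℝ) < ∏ i ∈ Finset.Icc 1 mp, βp i :=
    Finset.prod_pos fun i hi => hβpos i (Finset.mem_Icc.1 hi).1 (Finset.mem_Icc.1 hi).2
  have hRval : R = (∏ j : Fin (mp + 1), r (j : ℕ)) / ∏ i ∈ Finset.Icc 1 mp, βp i := by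
    rw [hR, ← Fin.prod_univ_eq_prod_range]
  have hKz : ∀ j : Fin (mp + 1), K (j : ℕ) = R * z j / (r (j : ℕ)) ^ 2 := by
    intro j
    simp only [hzdef]
    rw [← mul_div_assoc, div_div, mul_comm A.det (r (j : ℕ) ^ 2)]
    exact hK j
  -- the two key sum identities
  have SK2 : ∑ j ∈ Finset.range (mp + 1), K j * r j = 1 := by
    rw [← Fin.sum_univ_eq_sum_range (fun j => K j * r j)]
    have hterm : ∀ j : Fin (mp + 1), K (j : ℕ) * r (j : ℕ) = R * (z j / r (j : ℕ)) := by
      intro j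
      rw [hKz j]
      have hrj := hrneF j
      field_simp
    rw [Finset.sum_congr rfl fun j _ => hterm j, ← Finset.mul_sum, hRval]
    have hsz : ∑ j : Fin (mp + 1), z j / r (j : ℕ)
        = (∏ i ∈ Finset.Icc 1 mp, βp i) / ∏ j : Fin (mp + 1), r (j : ℕ) := by
      rw [eq_div_iff (ne_of_gt hPr)]
      exact hI2'
    rw [hsz]
    field_simp
  have SK1 : ∑ j ∈ Finset.range (mp + 1), K j = b - c := by
    rw [← Fin.sum_univ_eq_sum_range (fun j => K j)]
    rw [Finset.sum_congr rfl fun j _ => hKz j]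
    have hmulsum : ∑ j : Fin (mp + 1), R * z j / (r (j : ℕ)) ^ 2
        = R * ∑ j : Fin (mp + 1), z j / (r (j : ℕ)) ^ 2 := by
      rw [Finset.mul_sum]
      exact Finset.sum_congr rfl fun j _ => by rw [mul_div_assoc]
    rw [hmulsum, hRval]
    have hsz : ∑ j : Fin (mp + 1), z j / (r (j : ℕ)) ^ 2
        = (∏ i ∈ Finset.Icc 1 mp, βp i) *
            ((∑ j : Fin (mp + 1), 1 / r (j : ℕ)) - ∑ i ∈ Finset.Icc 1 mp, 1 / βp i)
          / ∏ j : Fin (mp + 1), r (j : ℕ) := by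
      rw [eq_div_iff (ne_of_gt hPr)]
      exact hI1'
    rw [hsz, hb, ← Fin.sum_univ_eq_sum_range (fun i => 1 / r i)]
    field_simp
    ring
  -- the gluing function G
  have hder1 : ∀ t : ℝ, HasDerivAt
      (fun s => (∑ j ∈ Finset.range (mp + 1),
          K j / (α * r j) * (Real.exp (r j * (s - b)) - 1))
        - ((s - c) ^ 2 - (b - c) ^ 2) / (2 * α))
      ((∑ j ∈ Finset.range (mp + 1), K j / α * Real.exp (r j * (t - b))) - (t - c) / α) t := by
    intro t
    have hsum := HasDerivAt.fun_sum (u := Finset.range (mp + 1))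
      (fun j (_ : j ∈ Finset.range (mp + 1)) =>
        ((((hasDerivAt_id t).sub_const b).const_mul (r j)).exp.sub_const 1).const_mul
          (K j / (α * r j)))
    simp only [id_eq] at hsum
    have hval : ∑ j ∈ Finset.range (mp + 1),
        K j / (α * r j) * (Real.exp (r j * (t - b)) * (r j * 1))
        = ∑ j ∈ Finset.range (mp + 1), K j / α * Real.exp (r j * (t - b)) := by
      refine Finset.sum_congr rfl fun j hj => ?_
      have hrj : r j ≠ 0 := ne_of_gt (hrpos j (Nat.lt_succ_iff.1 (Finset.mem_range.1 hj)))
      field_simp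
    rw [hval] at hsum
    have hq : HasDerivAt (fun s : ℝ => ((s - c) ^ 2 - (b - c) ^ 2) / (2 * α)) ((t - c) / α) t := by
      have h := ((((hasDerivAt_id t).sub_const c).fun_pow 2).sub_const ((b - c) ^ 2)).div_const (2 * α)
      refine h.congr_deriv ?_
      simp only [id_eq]
      field_simp
      ring
    exact hsum.sub hq
  have hder2 : ∀ t : ℝ, HasDerivAt
      (fun s => (∑ j ∈ Finset.range (mp + 1), K j / α * Real.exp (r j * (s - b))) - (s - c) / α)
      ((∑ j ∈ Finset.range (mp + 1), K j * r j / α * Real.exp (r j * (t - b))) - 1 / α) t := by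
    intro t
    have hsum := HasDerivAt.fun_sum (u := Finset.range (mp + 1))
      (fun j (_ : j ∈ Finset.range (mp + 1)) =>
        ((((hasDerivAt_id t).sub_const b).const_mul (r j)).exp).const_mul (K j / α))
    simp only [id_eq] at hsum
    have hval : ∑ j ∈ Finset.range (mp + 1),
        K j / α * (Real.exp (r j * (t - b)) * (r j * 1))
        = ∑ j ∈ Finset.range (mp + 1), K j * r j / α * Real.exp (r j * (t - b)) := by
      refine Finset.sum_congr rfl fun j hj => ?_
      ring
    rw [hval] at hsum
    have hq : HasDerivAt (fun s : ℝ => (s - c) / α) (1 / α) t :=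
      ((hasDerivAt_id t).sub_const c).div_const α
    exact hsum.sub hq
  have hg2cont : Continuous fun t : ℝ =>
      (∑ j ∈ Finset.range (mp + 1), K j * r j / α * Real.exp (r j * (t - b))) - 1 / α := by
    refine Continuous.sub ?_ continuous_const
    refine continuous_finset_sum _ fun j _ => ?_
    exact continuous_const.mul (Real.continuous_exp.comp (by continuity))
  have hgb0 : (∑ j ∈ Finset.range (mp + 1),
      K j / (α * r j) * (Real.exp (r j * (b - b)) - 1)) - ((b - c) ^ 2 - (b - c) ^ 2) / (2 * α)
      = 0 := by
    simp
  have hgb1 : (∑ j ∈ Finset.range (mp + 1), K j / α * Real.exp (r j * (b - b))) - (b - c) / α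
      = 0 := by
    simp only [sub_self, mul_zero, Real.exp_zero, mul_one]
    rw [← Finset.sum_div, SK1, sub_self]
  have hgb2 : (∑ j ∈ Finset.range (mp + 1), K j * r j / α * Real.exp (r j * (b - b))) - 1 / α
      = 0 := by
    simp only [sub_self, mul_zero, Real.exp_zero, mul_one]
    rw [← Finset.sum_div, SK2, sub_self]
  obtain ⟨G, hGcd, hGlt, hGge⟩ : ∃ G : ℝ → ℝ, ContDiff ℝ 2 G ∧
      (∀ t, t < b → G t = (∑ j ∈ Finset.range (mp + 1),
          K j / (α * r j) * (Real.exp (r j * (t - b)) - 1))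
        - ((t - c) ^ 2 - (b - c) ^ 2) / (2 * α)) ∧
      (∀ t, b ≤ t → G t = 0) := by
    refine ⟨fun t => if t < b then (∑ j ∈ Finset.range (mp + 1),
        K j / (α * r j) * (Real.exp (r j * (t - b)) - 1))
        - ((t - c) ^ 2 - (b - c) ^ 2) / (2 * α) else 0, ?_,
      fun t ht => if_pos ht, fun t ht => if_neg (not_lt.2 ht)⟩
    exact contDiff_glue hder1 hder2 hg2cont hgb0 hgb1 hgb2
  -- the master formula
  have hform : ∀ x y : ℝ, 0 ≤ y →
      v x y = (x - c) * y - α * y ^ 2 / 2 + G x - G (x - α * y) := by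
    intro x y hy
    have hαy : 0 ≤ α * y := mul_nonneg hα.le hy
    rw [hv]
    split_ifs with h1 h2
    · rw [hGlt x h1, hGlt _ (by linarith : x - α * y < b)]
      have hterm : ∀ j ∈ Finset.range (mp + 1),
          K j / (α * r j) * (1 - Real.exp (-(α * r j * y))) * Real.exp (r j * (x - b))
          = K j / (α * r j) * (Real.exp (r j * (x - b)) - 1)
            - K j / (α * r j) * (Real.exp (r j * ((x - α * y) - b)) - 1) := by
        intro j hj
        have he : r j * ((x - α * y) - b) = r j * (x - b) + (-(α * r j * y)) := by ring
        rw [he, Real.exp_add]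
        ring
      rw [Finset.sum_congr rfl hterm, Finset.sum_sub_distrib]
      have hq : (x - c) * y - α * y ^ 2 / 2 - ((x - c) ^ 2 - (b - c) ^ 2) / (2 * α)
          + (((x - α * y) - c) ^ 2 - (b - c) ^ 2) / (2 * α) = 0 := by
        field_simp
        ring
      linarith [hq]
    · rw [hGge x (not_lt.1 h1), hGlt _ (by linarith : x - α * y < b)]
      have hterm : ∀ j ∈ Finset.range (mp + 1),
          K j / (α * r j) * (1 - Real.exp (-(α * r j * (y - (x - b) / α))))
          = -(K j / (α * r j) * (Real.exp (r j * ((x - α * y) - b)) - 1)) := by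
        intro j hj
        have he : -(α * r j * (y - (x - b) / α)) = r j * ((x - α * y) - b) := by
          field_simp
          ring
        rw [he]
        ring
      rw [Finset.sum_congr rfl hterm, Finset.sum_neg_distrib]
      have hq : ((x - c) ^ 2 - (b - c) ^ 2) / (2 * α)
          = (x - c) * y - α * y ^ 2 / 2 + (((x - α * y) - c) ^ 2 - (b - c) ^ 2) / (2 * α) := by
        field_simp
        ring
      linarith [hq]
    · have h3 : α * y + b ≤ x := not_lt.1 h2
      rw [hGge x (by linarith), hGge _ (by linarith : b ≤ x - α * y)]
      ring
  -- final assembly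
  refine ⟨?_, ?_, ?_, ?_⟩
  · have hc1 : Continuous fun q : ℝ × ℝ => (q.1 - c) * q.2 - α * q.2 ^ 2 / 2 := by fun_prop
    have hc2 := hGcd.continuous
    refine ContinuousOn.congr (f := fun q : ℝ × ℝ =>
      (q.1 - c) * q.2 - α * q.2 ^ 2 / 2 + G q.1 - G (q.1 - α * q.2)) ?_ ?_
    · exact (((hc1.add (hc2.comp continuous_fst)).sub
        (hc2.comp (continuous_fst.sub (continuous_const.mul continuous_snd))))).continuousOn
    · intro q hq
      exact hform q.1 q.2 hq
  · intro y hy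
    have heq : (fun x => v x y) = fun x => (x - c) * y - α * y ^ 2 / 2 + G x - G (x - α * y) :=
      funext fun x => hform x y hy.le
    rw [heq]
    have h1 : ContDiff ℝ 2 fun x : ℝ => (x - c) * y - α * y ^ 2 / 2 := by
      exact ((contDiff_id.sub contDiff_const).mul contDiff_const).sub contDiff_const
    exact (h1.add hGcd).sub (hGcd.comp (contDiff_id.sub contDiff_const))
  · intro x
    refine ContDiffOn.congr ?_ (fun y (hy : y ∈ Set.Ioi 0) => hform x y (le_of_lt hy))
    refine ContDiff.contDiffOn ?_
    have h1 : ContDiff ℝ 1 fun y : ℝ => (x - c) * y - α * y ^ 2 / 2 := by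
      exact (contDiff_const.mul contDiff_id).sub
        ((contDiff_const.mul (contDiff_id.pow 2)).div_const 2)
    exact ((h1.add contDiff_const).sub
      ((hGcd.of_le one_le_two).comp (contDiff_const.sub (contDiff_const.mul contDiff_id))))
  · intro x
    rw [hform x 0 le_rfl]
    simp
end

section
/- The function u is continuously differentiable on ℝ, twice continuously differentiable on ℝ ∖ {b*}, nondecreasing and convex on ℝ, and satisfies u(x) > x − c for every x < b* (while u(x) = x − c for every x ≥ b*). -/
open Finset Matrix MeasureTheory
open Polynomial

lemma polyDerivProd {ι : Type*} [DecidableEq ι] (s : Finset ι) (f : ι → Polynomial ℝ) :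
    Polynomial.derivative (∏ i ∈ s, f i)
      = ∑ i ∈ s, (∏ j ∈ s.erase i, f j) * Polynomial.derivative (f i) := by
  induction s using Finset.induction_on with
  | empty => simp
  | @insert a s ha ih =>
    rw [Finset.prod_insert ha, Polynomial.derivative_mul, ih, Finset.sum_insert ha,
      Finset.erase_insert ha, Finset.mul_sum]
    congr 1
    · exact mul_comm _ _
    · refine Finset.sum_congr rfl fun i hi => ?_
      have hne : a ≠ i := fun h => ha (h ▸ hi)
      rw [Finset.erase_insert_of_ne hne,
        Finset.prod_insert (fun h => ha (Finset.mem_of_mem_erase h)), mul_assoc]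

lemma prodNeg {ι : Type*} (s : Finset ι) (g : ι → ℝ) :
    ∏ i ∈ s, (-g i) = (-1 : ℝ)^s.card * ∏ i ∈ s, g i := by
  rw [← Finset.prod_const, ← Finset.prod_mul_distrib]
  simp

lemma lagrange_form {n : ℕ} (v : Fin (n+1) → ℝ) (hv : Function.Injective v) (f : Polynomial ℝ)
    (hdeg : f.degree < (n+1 : ℕ)) :
    f = ∑ j : Fin (n+1), Polynomial.C (f.eval (v j) / ∏ k ∈ Finset.univ.erase j, (v j - v k)) *
        ∏ k ∈ Finset.univ.erase j, (Polynomial.X - Polynomial.C (v k)) := by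
  have h1 : f = Lagrange.interpolate Finset.univ v fun i => f.eval (v i) := by
    refine Lagrange.eq_interpolate hv.injOn ?_
    simpa using hdeg
  nth_rewrite 1 [h1]
  rw [Lagrange.interpolate_apply]
  refine Finset.sum_congr rfl fun j _ => ?_
  rw [Lagrange.basis]
  have h2 : ∀ k ∈ Finset.univ.erase j, Lagrange.basisDivisor (v j) (v k)
      = Polynomial.C ((v j - v k)⁻¹) * (Polynomial.X - Polynomial.C (v k)) := fun k _ => rfl
  rw [Finset.prod_congr rfl h2, Finset.prod_mul_distrib, ← map_prod,
    Finset.prod_inv_distrib, ← mul_assoc, ← Polynomial.C_mul, div_eq_mul_inv]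

lemma lagrange_eval {n : ℕ} (v : Fin (n+1) → ℝ) (hv : Function.Injective v) (f : Polynomial ℝ)
    (hdeg : f.degree < (n+1 : ℕ)) (x : ℝ) :
    f.eval x = ∑ j : Fin (n+1), (f.eval (v j) / ∏ k ∈ Finset.univ.erase j, (v j - v k)) *
        ∏ k ∈ Finset.univ.erase j, (x - v k) := by
  conv_lhs => rw [lagrange_form v hv f hdeg]
  simp [eval_finset_sum, eval_prod]

lemma lagrange_coeff {n : ℕ} (v : Fin (n+1) → ℝ) (hv : Function.Injective v) (f : Polynomial ℝ)
    (hdeg : f.degree < (n+1 : ℕ)) :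
    f.coeff n = ∑ j : Fin (n+1), f.eval (v j) / ∏ k ∈ Finset.univ.erase j, (v j - v k) := by
  conv_lhs => rw [lagrange_form v hv f hdeg]
  rw [Polynomial.finset_sum_coeff]
  refine Finset.sum_congr rfl fun j _ => ?_
  rw [Polynomial.coeff_C_mul]
  have hmon : (∏ k ∈ Finset.univ.erase j, (Polynomial.X - Polynomial.C (v k))).Monic :=
    monic_prod_of_monic _ _ (fun k _ => monic_X_sub_C _)
  have hdeg2 : (∏ k ∈ Finset.univ.erase j, (Polynomial.X - Polynomial.C (v k))).natDegree = n := by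
    rw [Polynomial.natDegree_prod _ _ (fun k _ => X_sub_C_ne_zero (v k))]
    simp [Polynomial.natDegree_X_sub_C, Finset.card_erase_of_mem]
  have h3 := hmon.coeff_natDegree
  rw [hdeg2] at h3
  rw [h3, mul_one]

lemma lagrange_deriv {n : ℕ} (v : Fin (n+1) → ℝ) (hv : Function.Injective v) (f : Polynomial ℝ)
    (hdeg : f.degree < (n+1 : ℕ)) (x : ℝ) :
    f.derivative.eval x = ∑ j : Fin (n+1), (f.eval (v j) / ∏ k ∈ Finset.univ.erase j, (v j - v k)) *
        ∑ l ∈ Finset.univ.erase j, ∏ k ∈ (Finset.univ.erase j).erase l, (x - v k) := by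
  conv_lhs => rw [lagrange_form v hv f hdeg]
  rw [Polynomial.derivative_sum, Polynomial.eval_finset_sum]
  refine Finset.sum_congr rfl fun j _ => ?_
  rw [Polynomial.derivative_C_mul, polyDerivProd]
  simp [eval_finset_sum, eval_prod, Finset.mul_sum]

theorem stmt17 (σ μ ρ lamn lamp c : ℝ)
    (hσ : 0 < σ) (hρ : 0 < ρ) (hlamn : 0 < lamn) (hlamp : 0 < lamp) (hc : 0 < c)
    (mp mn : ℕ) (hmp : 1 ≤ mp) (hmn : 1 ≤ mn)
    (ωp βp ωn βn : ℕ → ℝ)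
    (hωp : ∀ k, 1 ≤ k → k ≤ mp → 0 < ωp k)
    (hωpsum : ∑ k ∈ Finset.Icc 1 mp, ωp k = 1)
    (hβp1 : 0 < βp 1)
    (hβpmono : ∀ k, 1 ≤ k → k < mp → βp k < βp (k + 1))
    (hωn : ∀ k, 1 ≤ k → k ≤ mn → 0 < ωn k)
    (hωnsum : ∑ k ∈ Finset.Icc 1 mn, ωn k = 1)
    (hβn1 : 0 < βn 1)
    (hβnmono : ∀ k, 1 ≤ k → k < mn → βn k < βn (k + 1))
    (r : ℕ → ℝ)
    (hroot : ∀ j, j ≤ mp →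
      σ ^ 2 * (r j) ^ 2 / 2 + μ * r j - (ρ + lamn + lamp)
        + lamp * ∑ i ∈ Finset.Icc 1 mp, ωp i * βp i / (βp i - r j)
        + lamn * ∑ i ∈ Finset.Icc 1 mn, ωn i * βn i / (r j + βn i) = 0)
    (hr0 : 0 < r 0)
    (hinter : ∀ k, 1 ≤ k → k ≤ mp → r (k - 1) < βp k ∧ βp k < r k)
    (A : Matrix (Fin (mp + 1)) (Fin (mp + 1)) ℝ)
    (hA : ∀ i j : Fin (mp + 1), A i j = if (i : ℕ) = 0 then 1 else βp i / (βp i - r j))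
    (hdet : A.det ≠ 0)
    (R : ℝ)
    (hR : R = (∏ k ∈ Finset.range (mp + 1), r k) / ∏ k ∈ Finset.Icc 1 mp, βp k)
    (K : ℕ → ℝ)
    (hK : ∀ j : Fin (mp + 1), K j = R * cof A 0 j / ((r j) ^ 2 * A.det))
    (b : ℝ)
    (hb : b = c + (∑ i ∈ Finset.range (mp + 1), 1 / r i) - ∑ i ∈ Finset.Icc 1 mp, 1 / βp i)
    (u : ℝ → ℝ)
    (hu : ∀ x : ℝ,
      u x =
        if x < b then ∑ j ∈ Finset.range (mp + 1), K j * Real.exp (r j * (x - b))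
        else x - c)
    :
    ContDiff ℝ 1 u ∧
    ContDiffOn ℝ 2 u ({b}ᶜ : Set ℝ) ∧
    Monotone u ∧
    ConvexOn ℝ Set.univ u ∧
    (∀ x : ℝ, x < b → x - c < u x) ∧
    (∀ x : ℝ, b ≤ x → u x = x - c) := by
  -- ## Order facts
  have hstep : ∀ k, 1 ≤ k → k ≤ mp → r (k-1) < r k :=
    fun k h1 h2 => lt_trans (hinter k h1 h2).1 (hinter k h1 h2).2
  have hrmono : ∀ j k : ℕ, j < k → k ≤ mp → r j < r k := by
    intro j k
    induction k with
    | zero => omega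
    | succ k ih =>
      intro hj hk
      have h1 : r k < r (k+1) := by
        have := hstep (k+1) (by omega) hk
        simpa using this
      rcases Nat.lt_or_ge j k with h | h
      · exact lt_trans (ih h (by omega)) h1
      · have : j = k := by omega
        rw [this]; exact h1
  have hrpos : ∀ k : ℕ, k ≤ mp → 0 < r k := by
    intro k hk
    rcases Nat.eq_zero_or_pos k with h | h
    · rw [h]; exact hr0
    · exact lt_trans hr0 (hrmono 0 k h hk)
  have hβlt : ∀ i, 1 ≤ i → i ≤ mp → ∀ k, i ≤ k → k ≤ mp → βp i < r k := by
    intro i h1 h2 k hk hk2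
    rcases Nat.eq_or_lt_of_le hk with h | h
    · rw [← h]; exact (hinter i h1 h2).2
    · exact lt_trans (hinter i h1 h2).2 (hrmono i k h hk2)
  have hltβ : ∀ i, 1 ≤ i → i ≤ mp → ∀ k, k < i → r k < βp i := by
    intro i h1 h2 k hk
    rcases Nat.eq_or_lt_of_le (Nat.le_sub_one_of_lt hk) with h | h
    · rw [h]; exact (hinter i h1 h2).1
    · exact lt_trans (hrmono k (i-1) h (by omega)) (hinter i h1 h2).1
  have hβpos : ∀ i, 1 ≤ i → i ≤ mp → 0 < βp i :=
    fun i h1 h2 => lt_trans (hrpos 0 (by omega)) (hltβ i h1 h2 0 h1)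
  -- ## Lagrange setup
  set v : Fin (mp+1) → ℝ := fun j => r j with hv_def
  have hv : Function.Injective v := by
    intro j k h
    by_contra hne
    have hne' : (j:ℕ) ≠ (k:ℕ) := fun hh => hne (Fin.ext hh)
    rcases Nat.lt_or_ge (j:ℕ) (k:ℕ) with hlt | hge
    · exact absurd h (ne_of_lt (hrmono j k hlt (by omega)))
    · exact absurd h.symm (ne_of_lt (hrmono k j (by omega) (by omega)))
  set f : Polynomial ℝ := ∏ i ∈ Finset.Icc 1 mp, (Polynomial.X - Polynomial.C (βp i)) with hf_def
  have hfmonic : f.Monic := monic_prod_of_monic _ _ (fun i _ => monic_X_sub_C _)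
  have hfdeg : f.natDegree = mp := by
    rw [hf_def, Polynomial.natDegree_prod _ _ (fun i _ => X_sub_C_ne_zero (βp i))]
    simp [Polynomial.natDegree_X_sub_C]
  have hdegf : f.degree < ((mp+1 : ℕ) : WithBot ℕ) := by
    have h1 : f.degree ≤ (mp : WithBot ℕ) := hfdeg ▸ Polynomial.degree_le_natDegree
    exact lt_of_le_of_lt h1 (by exact_mod_cast Nat.lt_succ_self mp)
  have hfeval : ∀ x : ℝ, f.eval x = ∏ i ∈ Finset.Icc 1 mp, (x - βp i) := by
    intro x; rw [hf_def]; simp [eval_prod]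
  -- coefficients
  set cc : Fin (mp+1) → ℝ :=
    fun j => f.eval (v j) / ∏ k ∈ Finset.univ.erase j, (v j - v k) with hcc_def
  have hDne : ∀ j : Fin (mp+1), (∏ k ∈ Finset.univ.erase j, (v j - v k)) ≠ 0 := by
    intro j
    refine Finset.prod_ne_zero_iff.2 fun k hk => ?_
    have : k ≠ j := (Finset.mem_erase.1 hk).1
    exact sub_ne_zero_of_ne (fun hh => this (hv hh.symm))
  -- F0 : sum of cc = 1
  have hF0 : ∑ j : Fin (mp+1), cc j = 1 := by
    have h := lagrange_coeff v hv f hdegf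
    have h2 := hfmonic.coeff_natDegree
    rw [hfdeg] at h2
    rw [hcc_def, ← h, h2]
  -- Frow : rows
  have hβrne : ∀ i, 1 ≤ i → i ≤ mp → ∀ j : Fin (mp+1), βp i - v j ≠ 0 := by
    intro i h1 h2 j
    rcases Nat.lt_or_ge (j:ℕ) i with hlt | hge
    · exact ne_of_gt (sub_pos.2 (hltβ i h1 h2 j hlt))
    · exact ne_of_lt (sub_neg.2 (hβlt i h1 h2 j hge (Fin.is_le j)))
  have hrow : ∀ i, 1 ≤ i → i ≤ mp → ∑ j : Fin (mp+1), cc j / (βp i - v j) = 0 := by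
    intro i h1 h2
    have he := lagrange_eval v hv f hdegf (βp i)
    have hz : f.eval (βp i) = 0 := by
      rw [hfeval]
      exact Finset.prod_eq_zero (Finset.mem_Icc.2 ⟨h1, h2⟩) (sub_self _)
    set P : ℝ := ∏ k : Fin (mp+1), (βp i - v k) with hP_def
    have hPne : P ≠ 0 :=
      Finset.prod_ne_zero_iff.2 fun k _ => hβrne i h1 h2 k
    have h3 : ∑ j : Fin (mp+1), cc j * ∏ k ∈ Finset.univ.erase j, (βp i - v k)
        = P * ∑ j : Fin (mp+1), cc j / (βp i - v j) := by
      rw [Finset.mul_sum]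
      refine Finset.sum_congr rfl fun j _ => ?_
      have hne := hβrne i h1 h2 j
      have hp := Finset.mul_prod_erase Finset.univ (fun k => βp i - v k) (Finset.mem_univ j)
      rw [hP_def, ← hp]
      field_simp
    rw [hz] at he
    have h4 : (0:ℝ) = P * ∑ j : Fin (mp+1), cc j / (βp i - v j) := by
      rw [← h3]; exact he
    exact (mul_eq_zero.1 h4.symm).resolve_left hPne
  -- F1
  have hvne : ∀ j : Fin (mp+1), v j ≠ 0 := fun j => ne_of_gt (hrpos j (Fin.is_le j))
  have hprodv : ∀ j : Fin (mp+1), ∏ k ∈ Finset.univ.erase j, v k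
      = (∏ k : Fin (mp+1), v k) / v j := by
    intro j
    have hp := Finset.mul_prod_erase Finset.univ v (Finset.mem_univ j)
    rw [eq_div_iff (hvne j), mul_comm]
    exact hp
  have hP0 : ∀ j : Fin (mp+1), ∏ k ∈ Finset.univ.erase j, ((0:ℝ) - v k)
      = (-1:ℝ)^mp * ((∏ k : Fin (mp+1), v k) / v j) := by
    intro j
    have h1 : ∏ k ∈ Finset.univ.erase j, ((0:ℝ) - v k)
        = (-1:ℝ)^((Finset.univ.erase j).card) * ∏ k ∈ Finset.univ.erase j, v k := by
      simpa [zero_sub] using prodNeg (Finset.univ.erase j) v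
    have hcard : (Finset.univ.erase j).card = mp := by
      simp [Finset.card_erase_of_mem]
    rw [h1, hcard, hprodv j]
  have hF1 : (∑ j : Fin (mp+1), cc j / v j) * (∏ k : Fin (mp+1), v k)
      = ∏ i ∈ Finset.Icc 1 mp, βp i := by
    have he := lagrange_eval v hv f hdegf 0
    have hlhs : f.eval 0 = (-1:ℝ)^mp * ∏ i ∈ Finset.Icc 1 mp, βp i := by
      rw [hfeval]
      have := prodNeg (Finset.Icc 1 mp) βp
      simpa [zero_sub, Nat.card_Icc] using this
    have hrhs : ∑ j : Fin (mp+1), cc j * ∏ k ∈ Finset.univ.erase j, ((0:ℝ) - v k)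
        = (-1:ℝ)^mp * ((∑ j : Fin (mp+1), cc j / v j) * ∏ k : Fin (mp+1), v k) := by
      rw [Finset.sum_mul, Finset.mul_sum]
      refine Finset.sum_congr rfl fun j _ => ?_
      rw [hP0 j]
      ring
    rw [hlhs, hrhs] at he
    exact mul_left_cancel₀ (pow_ne_zero mp (by norm_num : (-1:ℝ) ≠ 0)) he.symm
  -- F2
  have hβne : ∀ i, 1 ≤ i → i ≤ mp → βp i ≠ 0 := fun i h1 h2 => ne_of_gt (hβpos i h1 h2)
  have hF2 : (∑ j : Fin (mp+1), cc j / (v j)^2) * (∏ k : Fin (mp+1), v k)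
      = (∏ i ∈ Finset.Icc 1 mp, βp i) *
        ((∑ k : Fin (mp+1), 1 / v k) - ∑ i ∈ Finset.Icc 1 mp, 1 / βp i) := by
    have hd := lagrange_deriv v hv f hdegf 0
    have hL : Polynomial.eval 0 (Polynomial.derivative f)
        = (-1:ℝ)^(mp-1) * ((∏ i ∈ Finset.Icc 1 mp, βp i) * ∑ i ∈ Finset.Icc 1 mp, 1 / βp i) := by
      have hderiv : Polynomial.derivative f
          = ∑ i ∈ Finset.Icc 1 mp, ∏ l ∈ (Finset.Icc 1 mp).erase i,
              (Polynomial.X - Polynomial.C (βp l)) := by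
        rw [hf_def, polyDerivProd]
        simp
      rw [hderiv, Polynomial.eval_finset_sum]
      have hterms : ∀ i ∈ Finset.Icc 1 mp, Polynomial.eval 0 (∏ l ∈ (Finset.Icc 1 mp).erase i,
          (Polynomial.X - Polynomial.C (βp l)))
          = (-1:ℝ)^(mp-1) * ((∏ l ∈ Finset.Icc 1 mp, βp l) * (1 / βp i)) := by
        intro i hi
        obtain ⟨h1, h2⟩ := Finset.mem_Icc.1 hi
        have h3 : Polynomial.eval 0 (∏ l ∈ (Finset.Icc 1 mp).erase i,
            (Polynomial.X - Polynomial.C (βp l)))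
            = ∏ l ∈ (Finset.Icc 1 mp).erase i, ((0:ℝ) - βp l) := by
          simp [Polynomial.eval_prod]
        have h4 : ∏ l ∈ (Finset.Icc 1 mp).erase i, ((0:ℝ) - βp l)
            = (-1:ℝ)^(((Finset.Icc 1 mp).erase i).card) * ∏ l ∈ (Finset.Icc 1 mp).erase i, βp l := by
          simpa [zero_sub] using prodNeg ((Finset.Icc 1 mp).erase i) βp
        have hcard : ((Finset.Icc 1 mp).erase i).card = mp - 1 := by
          rw [Finset.card_erase_of_mem hi, Nat.card_Icc]; omega
        have h5 : ∏ l ∈ (Finset.Icc 1 mp).erase i, βp l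
            = (∏ l ∈ Finset.Icc 1 mp, βp l) / βp i := by
          rw [eq_div_iff (hβne i h1 h2), mul_comm]
          exact Finset.mul_prod_erase _ _ hi
        rw [h3, h4, hcard, h5]
        ring
      rw [Finset.sum_congr rfl hterms, ← Finset.mul_sum, ← Finset.mul_sum]
    have hRH : ∀ j : Fin (mp+1),
        ∑ l ∈ Finset.univ.erase j, ∏ k ∈ (Finset.univ.erase j).erase l, ((0:ℝ) - v k)
        = (-1:ℝ)^(mp-1) * ((∏ k : Fin (mp+1), v k) / v j *
            ((∑ k : Fin (mp+1), 1 / v k) - 1 / v j)) := by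
      intro j
      have hterm : ∀ l ∈ Finset.univ.erase j,
          ∏ k ∈ (Finset.univ.erase j).erase l, ((0:ℝ) - v k)
          = (-1:ℝ)^(mp-1) * ((∏ k : Fin (mp+1), v k) / v j) * (1 / v l) := by
        intro l hl
        have h4 : ∏ k ∈ (Finset.univ.erase j).erase l, ((0:ℝ) - v k)
            = (-1:ℝ)^(((Finset.univ.erase j).erase l).card) *
              ∏ k ∈ (Finset.univ.erase j).erase l, v k := by
          simpa [zero_sub] using prodNeg ((Finset.univ.erase j).erase l) v
        have hcard : ((Finset.univ.erase j).erase l).card = mp - 1 := by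
          rw [Finset.card_erase_of_mem hl, Finset.card_erase_of_mem (Finset.mem_univ j)]
          simp
        have h5 : ∏ k ∈ (Finset.univ.erase j).erase l, v k
            = (∏ k : Fin (mp+1), v k) / v j / v l := by
          have e1 : v l * ∏ k ∈ (Finset.univ.erase j).erase l, v k
              = ∏ k ∈ Finset.univ.erase j, v k := Finset.mul_prod_erase _ _ hl
          rw [eq_div_iff (hvne l), mul_comm]
          exact e1.trans (hprodv j)
        rw [h4, hcard, h5]
        ring
      rw [Finset.sum_congr rfl hterm, ← Finset.mul_sum]
      have h6 : ∑ l ∈ Finset.univ.erase j, 1 / v l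
          = (∑ k : Fin (mp+1), 1 / v k) - 1 / v j :=
        Finset.sum_erase_eq_sub (Finset.mem_univ j)
      rw [h6]
      ring
    have hmain : (∏ i ∈ Finset.Icc 1 mp, βp i) * (∑ i ∈ Finset.Icc 1 mp, 1 / βp i)
        = ∑ j : Fin (mp+1), cc j * ((∏ k : Fin (mp+1), v k) / v j *
            ((∑ k : Fin (mp+1), 1 / v k) - 1 / v j)) := by
      have e : (-1:ℝ)^(mp-1) * ((∏ i ∈ Finset.Icc 1 mp, βp i) * ∑ i ∈ Finset.Icc 1 mp, 1 / βp i)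
          = (-1:ℝ)^(mp-1) * ∑ j : Fin (mp+1), cc j * ((∏ k : Fin (mp+1), v k) / v j *
              ((∑ k : Fin (mp+1), 1 / v k) - 1 / v j)) := by
        calc (-1:ℝ)^(mp-1) * ((∏ i ∈ Finset.Icc 1 mp, βp i) * ∑ i ∈ Finset.Icc 1 mp, 1 / βp i)
            = Polynomial.eval 0 (Polynomial.derivative f) := hL.symm
          _ = ∑ j : Fin (mp+1), cc j * ∑ l ∈ Finset.univ.erase j,
                ∏ k ∈ (Finset.univ.erase j).erase l, ((0:ℝ) - v k) := hd
          _ = ∑ j : Fin (mp+1), cc j * ((-1:ℝ)^(mp-1) * ((∏ k : Fin (mp+1), v k) / v j *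
                ((∑ k : Fin (mp+1), 1 / v k) - 1 / v j))) :=
              Finset.sum_congr rfl fun j _ => by rw [hRH j]
          _ = (-1:ℝ)^(mp-1) * ∑ j : Fin (mp+1), cc j * ((∏ k : Fin (mp+1), v k) / v j *
                ((∑ k : Fin (mp+1), 1 / v k) - 1 / v j)) := by
              rw [Finset.mul_sum]
              exact Finset.sum_congr rfl fun j _ => by ring
      exact mul_left_cancel₀ (pow_ne_zero _ (by norm_num : (-1:ℝ) ≠ 0)) e
    have hexp : ∑ j : Fin (mp+1), cc j * ((∏ k : Fin (mp+1), v k) / v j *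
          ((∑ k : Fin (mp+1), 1 / v k) - 1 / v j))
        = (∑ j : Fin (mp+1), cc j / v j) * (∏ k : Fin (mp+1), v k) *
            (∑ k : Fin (mp+1), 1 / v k)
          - (∑ j : Fin (mp+1), cc j / (v j)^2) * (∏ k : Fin (mp+1), v k) := by
      rw [Finset.sum_mul, Finset.sum_mul, Finset.sum_mul, ← Finset.sum_sub_distrib]
      refine Finset.sum_congr rfl fun j _ => ?_
      have hne := hvne j
      field_simp
    rw [hexp, hF1] at hmain
    linear_combination hmain
  -- positivity
  have hccpos : ∀ j : Fin (mp+1), 0 < cc j := by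
    intro j
    have himg : (Finset.range (mp+1)).erase (j:ℕ)
        = (Finset.univ.erase j).image (fun k : Fin (mp+1) => (k:ℕ)) := by
      ext x
      simp only [Finset.mem_erase, Finset.mem_range, Finset.mem_image, Finset.mem_univ, true_and]
      constructor
      · rintro ⟨hne, hlt⟩
        exact ⟨⟨x, hlt⟩, by simpa [Fin.ext_iff] using hne, rfl⟩
      · rintro ⟨k, hk, rfl⟩
        exact ⟨by simpa [Fin.ext_iff] using hk, k.isLt⟩
    have hbridge : ∀ g : ℕ → ℝ, ∏ k ∈ Finset.univ.erase j, g (k:ℕ)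
        = ∏ k ∈ (Finset.range (mp+1)).erase (j:ℕ), g k := by
      intro g
      rw [himg, Finset.prod_image (fun a _ b_1 _ h => Fin.ext h)]
    -- numerator
    have hnum : Polynomial.eval (v j) f = (∏ i ∈ (Finset.Icc 1 mp).filter (fun i => i ≤ (j:ℕ)), (v j - βp i)) *
        ∏ i ∈ (Finset.Icc 1 mp).filter (fun i => ¬ i ≤ (j:ℕ)), (v j - βp i) := by
      rw [hfeval]
      exact (Finset.prod_filter_mul_prod_filter_not _ _ _).symm
    have hnum1 : 0 < ∏ i ∈ (Finset.Icc 1 mp).filter (fun i => i ≤ (j:ℕ)), (v j - βp i) := by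
      refine Finset.prod_pos fun i hi => ?_
      obtain ⟨hi1, hi2⟩ := Finset.mem_filter.1 hi
      obtain ⟨h1, h2⟩ := Finset.mem_Icc.1 hi1
      exact sub_pos.2 (hβlt i h1 h2 j hi2 (Fin.is_le j))
    have hnegset : (Finset.Icc 1 mp).filter (fun i => ¬ i ≤ (j:ℕ)) = Finset.Icc ((j:ℕ)+1) mp := by
      ext x
      simp only [Finset.mem_filter, Finset.mem_Icc, not_le]
      omega
    have hnum2 : ∏ i ∈ (Finset.Icc 1 mp).filter (fun i => ¬ i ≤ (j:ℕ)), (v j - βp i)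
        = (-1:ℝ)^(mp - (j:ℕ)) * ∏ i ∈ Finset.Icc ((j:ℕ)+1) mp, (βp i - v j) := by
      rw [hnegset]
      have h1 : ∀ i ∈ Finset.Icc ((j:ℕ)+1) mp, v j - βp i = -(βp i - v j) := fun i _ => by ring
      rw [Finset.prod_congr rfl h1, prodNeg, Nat.card_Icc]
      congr 2
      omega
    have hnum2p : 0 < ∏ i ∈ Finset.Icc ((j:ℕ)+1) mp, (βp i - v j) := by
      refine Finset.prod_pos fun i hi => ?_
      obtain ⟨h1, h2⟩ := Finset.mem_Icc.1 hi
      exact sub_pos.2 (hltβ i (by omega) h2 j (by omega))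
    -- denominator
    have hden : ∏ k ∈ Finset.univ.erase j, (v j - v k)
        = (∏ k ∈ ((Finset.range (mp+1)).erase (j:ℕ)).filter (fun k => k < (j:ℕ)), (v j - r k)) *
          ∏ k ∈ ((Finset.range (mp+1)).erase (j:ℕ)).filter (fun k => ¬ k < (j:ℕ)), (v j - r k) := by
      rw [hbridge (fun k => v j - r k)]
      exact (Finset.prod_filter_mul_prod_filter_not _ _ _).symm
    have hden1 : 0 < ∏ k ∈ ((Finset.range (mp+1)).erase (j:ℕ)).filter (fun k => k < (j:ℕ)), (v j - r k) := by
      refine Finset.prod_pos fun k hk => ?_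
      obtain ⟨hk1, hk2⟩ := Finset.mem_filter.1 hk
      exact sub_pos.2 (hrmono k j hk2 (Fin.is_le j))
    have hdennegset : ((Finset.range (mp+1)).erase (j:ℕ)).filter (fun k => ¬ k < (j:ℕ))
        = Finset.Icc ((j:ℕ)+1) mp := by
      ext x
      simp only [Finset.mem_filter, Finset.mem_erase, Finset.mem_range, Finset.mem_Icc, not_lt]
      omega
    have hden2 : ∏ k ∈ ((Finset.range (mp+1)).erase (j:ℕ)).filter (fun k => ¬ k < (j:ℕ)), (v j - r k)
        = (-1:ℝ)^(mp - (j:ℕ)) * ∏ k ∈ Finset.Icc ((j:ℕ)+1) mp, (r k - v j) := by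
      rw [hdennegset]
      have h1 : ∀ k ∈ Finset.Icc ((j:ℕ)+1) mp, v j - r k = -(r k - v j) := fun k _ => by ring
      rw [Finset.prod_congr rfl h1, prodNeg, Nat.card_Icc]
      congr 2
      omega
    have hden2p : 0 < ∏ k ∈ Finset.Icc ((j:ℕ)+1) mp, (r k - v j) := by
      refine Finset.prod_pos fun k hk => ?_
      obtain ⟨h1, h2⟩ := Finset.mem_Icc.1 hk
      exact sub_pos.2 (hrmono j k (by omega) h2)
    have hcc : cc j = ((∏ i ∈ (Finset.Icc 1 mp).filter (fun i => i ≤ (j:ℕ)), (v j - βp i)) *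
          ∏ i ∈ Finset.Icc ((j:ℕ)+1) mp, (βp i - v j)) /
        ((∏ k ∈ ((Finset.range (mp+1)).erase (j:ℕ)).filter (fun k => k < (j:ℕ)), (v j - r k)) *
          ∏ k ∈ Finset.Icc ((j:ℕ)+1) mp, (r k - v j)) := by
      show Polynomial.eval (v j) f / (∏ k ∈ Finset.univ.erase j, (v j - v k)) = _
      rw [hnum, hnum2, hden, hden2]
      rw [show ∀ a b c d : ℝ, ∀ e : ℝ, (a * (e * b)) / (c * (e * d)) = (e * (a*b)) / (e * (c*d)) from
        fun a b c d e => by ring]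
      exact mul_div_mul_left _ _ (pow_ne_zero _ (by norm_num : (-1:ℝ) ≠ 0))
    rw [hcc]
    exact div_pos (mul_pos hnum1 hnum2p) (mul_pos hden1 hden2p)
  -- ## Matrix step : K j = R * cc j / (v j)^2
  have hAw : A.mulVec (fun j => R * cc j) = fun i : Fin (mp+1) => if (i:ℕ) = 0 then R else 0 := by
    funext i
    show ∑ j : Fin (mp+1), A i j * (R * cc j) = _
    by_cases hi : (i:ℕ) = 0
    · rw [if_pos hi]
      have h1 : ∀ j : Fin (mp+1), A i j * (R * cc j) = R * cc j := by
        intro j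
        rw [hA i j, if_pos hi, one_mul]
      rw [Finset.sum_congr rfl fun j _ => h1 j, ← Finset.mul_sum, hF0, mul_one]
    · rw [if_neg hi]
      have h1 : 1 ≤ (i:ℕ) := Nat.one_le_iff_ne_zero.2 hi
      have h2 : (i:ℕ) ≤ mp := Fin.is_le i
      have h3 : ∀ j : Fin (mp+1), A i j * (R * cc j)
          = (R * βp i) * (cc j / (βp i - v j)) := by
        intro j
        rw [hA i j, if_neg hi]
        have : v j = r (j:ℕ) := rfl
        rw [← this]
        ring
      rw [Finset.sum_congr rfl fun j _ => h3 j, ← Finset.mul_sum, hrow i h1 h2, mul_zero]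
  have hadj : ∀ jj : Fin (mp+1), A.det * (R * cc jj) = R * (A.adjugate jj 0) := by
    have h2 : A.adjugate.mulVec (A.mulVec (fun j => R * cc j)) = A.det • (fun j => R * cc j) := by
      rw [Matrix.mulVec_mulVec, Matrix.adjugate_mul, Matrix.smul_mulVec, Matrix.one_mulVec]
    intro jj
    have h3 := congrFun h2 jj
    rw [hAw] at h3
    have h4 : A.adjugate.mulVec (fun i : Fin (mp+1) => if (i:ℕ) = 0 then R else 0) jj
        = A.adjugate jj 0 * R := by
      show ∑ i : Fin (mp+1), A.adjugate jj i * (if (i:ℕ) = 0 then R else 0) = _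
      rw [Finset.sum_eq_single 0]
      · simp
      · intro i _ hne
        rw [if_neg (fun hh => hne (Fin.ext (by simpa using hh))), mul_zero]
      · intro h; exact absurd (Finset.mem_univ _) h
    rw [h4] at h3
    have h5 : (A.det • (fun j : Fin (mp+1) => R * cc j)) jj = A.det * (R * cc jj) := rfl
    rw [h5] at h3
    rw [h3.symm]
    ring
  have hcofadj : ∀ jj : Fin (mp+1), cof A 0 jj = A.adjugate jj 0 := by
    intro jj
    rw [Matrix.adjugate_fin_succ_eq_det_submatrix, cof]
  have hKw : ∀ j : Fin (mp+1), K j = R * cc j / (v j)^2 := by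
    intro j
    rw [hK j, hcofadj j, ← hadj j]
    have hv2 : v j ≠ 0 := hvne j
    have : r (j:ℕ) = v j := rfl
    rw [this]
    field_simp
  -- ## key sums about K
  have hprodr : ∏ k : Fin (mp+1), v k = ∏ k ∈ Finset.range (mp+1), r k :=
    Fin.prod_univ_eq_prod_range _ _
  have hβprodpos : 0 < ∏ i ∈ Finset.Icc 1 mp, βp i :=
    Finset.prod_pos fun i hi => hβpos i (Finset.mem_Icc.1 hi).1 (Finset.mem_Icc.1 hi).2
  have hrprodpos : 0 < ∏ k ∈ Finset.range (mp+1), r k :=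
    Finset.prod_pos fun k hk => hrpos k (by have := Finset.mem_range.1 hk; omega)
  have hRpos : 0 < R := by
    rw [hR]
    exact div_pos hrprodpos hβprodpos
  have hKpos : ∀ j : Fin (mp+1), 0 < K (j:ℕ) := by
    intro j
    rw [hKw j]
    exact div_pos (mul_pos hRpos (hccpos j)) (pow_pos (hrpos j (Fin.is_le j)) 2)
  have hKr : ∑ j ∈ Finset.range (mp+1), K j * r j = 1 := by
    rw [← Fin.sum_univ_eq_sum_range (fun j => K j * r j) (mp+1)]
    have h1 : ∀ j : Fin (mp+1), K (j:ℕ) * r (j:ℕ) = R * (cc j / v j) := by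
      intro j
      rw [hKw j]
      have hv2 : v j ≠ 0 := hvne j
      have : r (j:ℕ) = v j := rfl
      rw [this]
      field_simp
    rw [Finset.sum_congr rfl fun j _ => h1 j, ← Finset.mul_sum]
    have h2 : ∑ j : Fin (mp+1), cc j / v j
        = (∏ i ∈ Finset.Icc 1 mp, βp i) / ∏ k ∈ Finset.range (mp+1), r k := by
      rw [eq_div_iff (ne_of_gt hrprodpos), ← hprodr]
      exact hF1
    rw [h2, hR]
    field_simp
  have hKsum : ∑ j ∈ Finset.range (mp+1), K j = b - c := by
    rw [← Fin.sum_univ_eq_sum_range (fun j => K j) (mp+1)]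
    have h1 : ∀ j : Fin (mp+1), K (j:ℕ) = R * (cc j / (v j)^2) := by
      intro j
      rw [hKw j, mul_div_assoc]
    rw [Finset.sum_congr rfl fun j _ => h1 j, ← Finset.mul_sum]
    have h2 : ∑ j : Fin (mp+1), cc j / (v j)^2
        = ((∏ i ∈ Finset.Icc 1 mp, βp i) *
            ((∑ k ∈ Finset.range (mp+1), 1 / r k) - ∑ i ∈ Finset.Icc 1 mp, 1 / βp i)) /
          ∏ k ∈ Finset.range (mp+1), r k := by
      rw [eq_div_iff (ne_of_gt hrprodpos), ← hprodr]
      rw [← Fin.sum_univ_eq_sum_range (fun k => 1 / r k) (mp+1)]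
      exact hF2
    rw [h2, hR, hb]
    field_simp
    ring
  -- ## Analysis
  have husm : ∀ x : ℝ, b ≤ x → u x = x - c := fun x hx => by
    rw [hu x, if_neg (not_lt.2 hx)]
  have hub : u b = b - c := husm b le_rfl
  have hKpos' : ∀ j ∈ Finset.range (mp+1), 0 < K j := by
    intro j hj
    have := hKpos ⟨j, Finset.mem_range.1 hj⟩
    simpa using this
  have hrpos' : ∀ j ∈ Finset.range (mp+1), 0 < r j := fun j hj =>
    hrpos j (by have := Finset.mem_range.1 hj; omega)
  have hFder : ∀ x : ℝ, HasDerivAt (fun y => ∑ j ∈ Finset.range (mp+1), K j * Real.exp (r j * (y - b)))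
      (∑ j ∈ Finset.range (mp+1), K j * r j * Real.exp (r j * (x - b))) x := by
    intro x
    refine HasDerivAt.fun_sum fun j hj => ?_
    have h1 : HasDerivAt (fun y : ℝ => r j * (y - b)) (r j) x := by
      simpa using ((hasDerivAt_id x).sub_const b).const_mul (r j)
    have h3 := (h1.exp).const_mul (K j)
    rw [show K j * r j * Real.exp (r j * (x - b)) = K j * (Real.exp (r j * (x - b)) * r j) by ring]
    exact h3
  have hsum1 : ∀ z : ℝ, z = b → ∑ j ∈ Finset.range (mp+1), K j * r j * Real.exp (r j * (z - b)) = 1 := by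
    intro z hz
    rw [← hKr]
    refine Finset.sum_congr rfl fun j _ => ?_
    rw [hz, sub_self, mul_zero, Real.exp_zero, mul_one]
  have hudD : ∀ x : ℝ, HasDerivAt u
      (∑ j ∈ Finset.range (mp+1), K j * r j * Real.exp (r j * (min x b - b))) x := by
    intro x
    rcases lt_trichotomy x b with hx | hxeq | hx
    · have hev : u =ᶠ[nhds x] (fun y => ∑ j ∈ Finset.range (mp+1), K j * Real.exp (r j * (y - b))) := by
        filter_upwards [Iio_mem_nhds hx] with y hy
        have hy' : y < b := hy
        rw [hu y, if_pos hy']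
      have h2 := (hFder x).congr_of_eventuallyEq hev
      rw [min_eq_left (le_of_lt hx)]
      exact h2
    · subst hxeq
      have hFb : (fun y => ∑ j ∈ Finset.range (mp+1), K j * Real.exp (r j * (y - x))) x = u x := by
        rw [hub, ← hKsum]
        refine Finset.sum_congr rfl fun j _ => ?_
        rw [sub_self, mul_zero, Real.exp_zero, mul_one]
      have hl : HasDerivWithinAt u 1 (Set.Iic x) x := by
        have h1 : HasDerivWithinAt (fun y => ∑ j ∈ Finset.range (mp+1), K j * Real.exp (r j * (y - x))) 1 (Set.Iic x) x := by
          have h0 := ((hFder x).hasDerivWithinAt (s := Set.Iic x))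
          rwa [hsum1 x rfl] at h0
        refine h1.congr ?_ hFb.symm
        intro y hy
        rcases eq_or_lt_of_le (Set.mem_Iic.1 hy) with hyb | hyb
        · rw [hyb]; exact hFb.symm
        · rw [hu y, if_pos hyb]
      have hri : HasDerivWithinAt u 1 (Set.Ici x) x := by
        have h1 : HasDerivWithinAt (fun y : ℝ => y - c) 1 (Set.Ici x) x :=
          ((hasDerivAt_id x).sub_const c).hasDerivWithinAt
        refine h1.congr ?_ hub
        intro y hy
        exact husm y (Set.mem_Ici.1 hy)
      have h3 := hl.union hri
      rw [Set.Iic_union_Ici] at h3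
      have h4 := hasDerivWithinAt_univ.1 h3
      rwa [hsum1 (min x x) (by simp)]
    · have hev : u =ᶠ[nhds x] (fun y : ℝ => y - c) := by
        filter_upwards [Ioi_mem_nhds hx] with y hy
        exact husm y (le_of_lt hy)
      have h2 := ((hasDerivAt_id x).sub_const c).congr_of_eventuallyEq hev
      rwa [hsum1 (min x b) (min_eq_right (le_of_lt hx))]
  have hdiff : Differentiable ℝ u := fun x => (hudD x).differentiableAt
  have hderivu : deriv u = fun x => ∑ j ∈ Finset.range (mp+1), K j * r j * Real.exp (r j * (min x b - b)) :=
    funext fun x => (hudD x).deriv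
  have hDcont : Continuous (fun x : ℝ => ∑ j ∈ Finset.range (mp+1), K j * r j * Real.exp (r j * (min x b - b))) := by
    refine continuous_finset_sum _ fun j _ => ?_
    exact continuous_const.mul (Real.continuous_exp.comp
      (continuous_const.mul (((continuous_id.min continuous_const)).sub continuous_const)))
  have hC1 : ContDiff ℝ 1 u := by
    rw [contDiff_one_iff_deriv]
    exact ⟨hdiff, by rw [hderivu]; exact hDcont⟩
  have hC2 : ContDiffOn ℝ 2 u ({b}ᶜ : Set ℝ) := by
    intro x hx
    have hxb : x ≠ b := hx
    refine ContDiffAt.contDiffWithinAt ?_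
    rcases lt_or_gt_of_ne hxb with hlt | hgt
    · have hFcd : ContDiff ℝ 2 (fun y : ℝ => ∑ j ∈ Finset.range (mp+1), K j * Real.exp (r j * (y - b))) := by
        refine ContDiff.sum fun j _ => ?_
        exact contDiff_const.mul (Real.contDiff_exp.comp
          (contDiff_const.mul (contDiff_id.sub contDiff_const)))
      refine hFcd.contDiffAt.congr_of_eventuallyEq ?_
      filter_upwards [Iio_mem_nhds hlt] with y hy
      have hy' : y < b := hy
      rw [hu y, if_pos hy']
    · have hFcd : ContDiff ℝ 2 (fun y : ℝ => y - c) := contDiff_id.sub contDiff_const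
      refine hFcd.contDiffAt.congr_of_eventuallyEq ?_
      filter_upwards [Ioi_mem_nhds hgt] with y hy
      exact husm y (le_of_lt hy)
  have hmono : Monotone u := by
    refine monotone_of_deriv_nonneg hdiff ?_
    intro x
    rw [hderivu]
    refine Finset.sum_nonneg fun j hj => ?_
    exact le_of_lt (mul_pos (mul_pos (hKpos' j hj) (hrpos' j hj)) (Real.exp_pos _))
  have hconv : ConvexOn ℝ Set.univ u := by
    refine Monotone.convexOn_univ_of_deriv hdiff ?_
    rw [hderivu]
    intro x y hxy
    refine Finset.sum_le_sum fun j hj => ?_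
    refine mul_le_mul_of_nonneg_left ?_
      (le_of_lt (mul_pos (hKpos' j hj) (hrpos' j hj)))
    refine Real.exp_le_exp.2 ?_
    refine mul_le_mul_of_nonneg_left ?_ (le_of_lt (hrpos' j hj))
    exact sub_le_sub_right (min_le_min hxy le_rfl) b
  have hDltOne : ∀ x : ℝ, x < b →
      ∑ j ∈ Finset.range (mp+1), K j * r j * Real.exp (r j * (min x b - b)) < 1 := by
    intro x hx
    rw [← hKr]
    refine Finset.sum_lt_sum_of_nonempty ⟨0, Finset.mem_range.2 (by omega)⟩ ?_
    intro j hj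
    have hKj := hKpos' j hj
    have hrj := hrpos' j hj
    rw [min_eq_left (le_of_lt hx)]
    have hneg : r j * (x - b) < 0 := mul_neg_of_pos_of_neg hrj (sub_neg.2 hx)
    have hexp : Real.exp (r j * (x - b)) < 1 := Real.exp_lt_one_iff.2 hneg
    calc K j * r j * Real.exp (r j * (x - b)) < K j * r j * 1 :=
          mul_lt_mul_of_pos_left hexp (mul_pos hKj hrj)
      _ = K j * r j := mul_one _
  have hstrict : ∀ x : ℝ, x < b → x - c < u x := by
    intro x hx
    have hphi : ∀ y : ℝ, HasDerivAt (fun z => u z - (z - c))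
        ((∑ j ∈ Finset.range (mp+1), K j * r j * Real.exp (r j * (min y b - b))) - 1) y :=
      fun y => (hudD y).sub ((hasDerivAt_id y).sub_const c)
    have hanti : StrictAntiOn (fun z => u z - (z - c)) (Set.Iic b) := by
      refine strictAntiOn_of_deriv_neg (convex_Iic b) ?_ ?_
      · exact (hdiff.continuous.sub (continuous_id.sub continuous_const)).continuousOn
      · intro y hy
        rw [interior_Iic] at hy
        rw [(hphi y).deriv]
        have := hDltOne y hy
        linarith
    have h1 : u b - (b - c) < u x - (x - c) :=
      hanti (Set.mem_Iic.2 (le_of_lt hx)) (Set.mem_Iic.2 le_rfl) hx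
    rw [hub] at h1
    simp only [sub_self] at h1
    linarith
  exact ⟨hC1, hC2, hmono, hconv, hstrict, husm⟩
end
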